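/- arXiv:1711.03011 — 5 statements merged into one kernel-verified Lean document; each statement's English description precedes it below -/
import Mathlib

section
/- Let g : (0,1) → ℝ be nondecreasing and càdlàg, and h ∈ L²(0,1). Define h_g(u) to equal the average of h over I (i.e., (1/leb(I)) ∫_I h) whenever u belongs to an interval I = g⁻¹({g(u)}) of positive Lebesgue measure, and h_g(u) = h(u) otherwise. Then h_g equals almost everywhere the orthogonal projection of h onto the closed subspace L₂(g) of L²(0,1) consisting of (completed) σ(g)-measurable square-integrable functions. -/
open MeasureTheory Set
open scoped ENNReal NNReal

noncomputable section

/-- Lebesgue measure restricted to `(0,1)`. -/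
def mu01 : Measure ℝ := volume.restrict (Set.Ioo (0:ℝ) 1)

/-- The level set of `g` through `u`, inside `(0,1)`. -/
def levelSet (g : ℝ → ℝ) (u : ℝ) : Set ℝ := {v ∈ Set.Ioo (0:ℝ) 1 | g v = g u}

open Classical in
/-- The explicit candidate `h_g` for the projection: average of `h` over the level
interval of `g` through `u` when that interval has positive measure, `h u` otherwise. -/
def projFun (g h : ℝ → ℝ) (u : ℝ) : ℝ :=
  if 0 < volume (levelSet g u) then
    (∫ v in levelSet g u, h v) / (volume (levelSet g u)).toReal
  else h u

/-- Level set of `g` at value `y`, inside `(0,1)`. -/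
def lvl (g : ℝ → ℝ) (y : ℝ) : Set ℝ := {v ∈ Set.Ioo (0:ℝ) 1 | g v = y}

lemma levelSet_eq_lvl (g : ℝ → ℝ) (u : ℝ) : levelSet g u = lvl g (g u) := rfl

lemma lvl_eq (g : ℝ → ℝ) (y : ℝ) : lvl g y = Set.Ioo (0:ℝ) 1 ∩ g ⁻¹' {y} := by
  ext v
  simp only [lvl, Set.mem_setOf_eq, Set.mem_inter_iff, Set.mem_preimage,
    Set.mem_singleton_iff]

lemma measurableSet_lvl (g : ℝ → ℝ) (hg : Measurable g) (y : ℝ) :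
    MeasurableSet (lvl g y) := by
  rw [lvl_eq]; exact measurableSet_Ioo.inter (hg (measurableSet_singleton y))

lemma lvl_subset (g : ℝ → ℝ) (y : ℝ) : lvl g y ⊆ Set.Ioo (0:ℝ) 1 := fun v hv => hv.1

lemma lvl_disjoint (g : ℝ → ℝ) : Pairwise (Function.onFun Disjoint fun y => lvl g y) := by
  intro y y' hyy'
  refine Set.disjoint_left.2 fun v hv hv' => hyy' ?_
  rw [← hv.2, ← hv'.2]

/-- A function that agrees with a measurable one off a countable set is measurable. -/
lemma measurable_of_countable_ne {f f' : ℝ → ℝ} (hf : Measurable f)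
    (hs : {y | f y ≠ f' y}.Countable) : Measurable f' := by
  intro E hE
  have : f' ⁻¹' E = (f ⁻¹' E \ {y | f y ≠ f' y}) ∪ ({y | f y ≠ f' y} ∩ f' ⁻¹' E) := by
    ext x
    by_cases hx : f x = f' x
    · simp [Set.mem_preimage, hx, Set.mem_setOf_eq]
    · simp [Set.mem_preimage, Set.mem_setOf_eq, hx]
  rw [this]
  exact ((hf hE).diff hs.measurableSet).union
    ((hs.mono Set.inter_subset_left).measurableSet)


lemma projFun_congr_ae {g h h' : ℝ → ℝ} (hae : h =ᵐ[mu01] h') :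
    projFun g h =ᵐ[mu01] projFun g h' := by
  have hae' : h =ᵐ[volume.restrict (Set.Ioo (0:ℝ) 1)] h' := hae
  have hint : ∀ u, (∫ v in levelSet g u, h v) = ∫ v in levelSet g u, h' v := by
    intro u
    exact integral_congr_ae
      (ae_restrict_of_ae_restrict_of_subset (fun v hv => hv.1) hae')
  filter_upwards [hae] with u hu
  unfold projFun
  split_ifs with hpos
  · rw [hint u]
  · exact hu

instance : IsFiniteMeasure mu01 := by
  constructor
  rw [mu01, Measure.restrict_apply_univ, Real.volume_Ioo]
  exact ENNReal.ofReal_lt_top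

/-- The sub-σ-algebra generated by `g`. -/
def sigAlg (g : ℝ → ℝ) : MeasurableSpace ℝ := MeasurableSpace.comap g (borel ℝ)

lemma projFun_ae_eq_condexp (g h : ℝ → ℝ) (hgmono : MonotoneOn g (Set.Ioo (0:ℝ) 1))
    (hgmeas : Measurable g) (hmeas : StronglyMeasurable h) (hint : Integrable h mu01) :
    projFun g h =ᵐ[mu01] mu01[h | MeasurableSpace.comap g (borel ℝ)] := by
  classical
  have hm : sigAlg g ≤ Real.measurableSpace := hgmeas.comap_le
  show projFun g h =ᵐ[mu01] mu01[h | sigAlg g]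
  -- the countable set of "atom" values
  set C : Set ℝ := {y | 0 < volume (lvl g y)} with hC_def
  have hCcount : C.Countable :=
    MeasureTheory.Measure.countable_meas_pos_of_disjoint_iUnion
      (μ := volume) (fun y => measurableSet_lvl g hgmeas y) (lvl_disjoint g)
  have hpmeas : MeasurableSet (g ⁻¹' C) := hgmeas hCcount.measurableSet
  -- g is injective off the atoms
  set N : Set ℝ := Set.Ioo (0:ℝ) 1 \ g ⁻¹' C with hN_def
  have hNmeas : MeasurableSet N := measurableSet_Ioo.diff hpmeas
  have hkey : ∀ u v : ℝ, u ∈ N → v ∈ N → u < v → g u ≠ g v := by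
    intro u v hu hv hlt heq
    have hsub : Set.Icc u v ⊆ lvl g (g u) := by
      intro w hw
      have hwI : w ∈ Set.Ioo (0:ℝ) 1 :=
        ⟨lt_of_lt_of_le hu.1.1 hw.1, lt_of_le_of_lt hw.2 hv.1.2⟩
      refine ⟨hwI, le_antisymm ?_ ?_⟩
      · calc g w ≤ g v := hgmono hwI hv.1 hw.2
          _ = g u := heq.symm
      · exact hgmono hu.1 hwI hw.1
    have hpos : 0 < volume (lvl g (g u)) := by
      refine lt_of_lt_of_le ?_ (measure_mono hsub)
      rw [Real.volume_Icc]
      exact ENNReal.ofReal_pos.2 (by linarith)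
    exact hu.2 hpos
  have hinj : Set.InjOn g N := by
    intro u hu v hv huv
    by_contra hne
    rcases lt_or_gt_of_ne hne with hlt | hlt
    · exact hkey u v hu hv hlt huv
    · exact hkey v u hv hu hlt huv.symm
  -- measurable extension of h off the atoms, as a function of g
  haveI : StandardBorelSpace N := hNmeas.standardBorel
  have hgN : Measurable (fun x : N => g x) := hgmeas.comp measurable_subtype_coe
  have hembed : MeasurableEmbedding (fun x : N => g x) :=
    hgN.measurableEmbedding (fun x y hxy => Subtype.ext (hinj x.2 y.2 hxy))
  obtain ⟨ψ, hψmeas, hψ⟩ := hembed.exists_measurable_extend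
    (hmeas.measurable.comp measurable_subtype_coe : Measurable fun x : N => h x)
    (fun _ => ⟨0⟩)
  -- the candidate function on the value side
  set avg : ℝ → ℝ := fun y => (∫ v in lvl g y, h v) / (volume (lvl g y)).toReal with havg
  set φ : ℝ → ℝ := fun y => if 0 < volume (lvl g y) then avg y else ψ y with hφ_def
  have hφmeas : Measurable φ := by
    refine measurable_of_countable_ne hψmeas (hCcount.mono ?_)
    intro y hy
    by_contra hyC
    refine hy ?_
    simp only [hφ_def]
    exact (if_neg (show ¬ 0 < volume (lvl g y) from hyC)).symm
  -- pointwise identities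
  have hproj_eq : ∀ u ∈ Set.Ioo (0:ℝ) 1, projFun g h u = φ (g u) := by
    intro u hu
    unfold projFun
    rw [levelSet_eq_lvl]
    by_cases hpos : 0 < volume (lvl g (g u))
    · rw [if_pos hpos]
      simp only [hφ_def]
      rw [if_pos hpos]
    · rw [if_neg hpos]
      simp only [hφ_def]
      rw [if_neg hpos]
      have huN : u ∈ N := ⟨hu, fun hc => hpos hc⟩
      exact (congrFun hψ (⟨u, huN⟩ : N)).symm
  have hproj_h : ∀ u ∈ Set.Ioo (0:ℝ) 1, g u ∉ C → projFun g h u = h u := by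
    intro u _ hnC
    unfold projFun
    rw [levelSet_eq_lvl, if_neg (show ¬ 0 < volume (lvl g (g u)) from hnC)]
  have hproj_const : ∀ c ∈ C, ∀ u ∈ lvl g c, projFun g h u = avg c := by
    intro c hc u hu
    unfold projFun
    rw [levelSet_eq_lvl, hu.2, if_pos (show 0 < volume (lvl g c) from hc)]
  -- a.e. identity and measurability
  have haeIoo : ∀ᵐ u ∂mu01, u ∈ Set.Ioo (0:ℝ) 1 := by
    have : ∀ᵐ u ∂(volume.restrict (Set.Ioo (0:ℝ) 1)), u ∈ Set.Ioo (0:ℝ) 1 :=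
      ae_restrict_mem measurableSet_Ioo
    exact this
  have hproj_ae : projFun g h =ᵐ[mu01] φ ∘ g := by
    filter_upwards [haeIoo] with u hu using hproj_eq u hu
  have hgm : @Measurable ℝ ℝ (sigAlg g) _ g := fun t ht => ⟨t, ht, rfl⟩
  have hASM' : AEStronglyMeasurable[sigAlg g] (projFun g h) mu01 :=
    ⟨φ ∘ g, (hφmeas.comp hgm).stronglyMeasurable, hproj_ae⟩
  have hASM : AEStronglyMeasurable (projFun g h) mu01 :=
    ((hφmeas.comp hgmeas).stronglyMeasurable.aestronglyMeasurable).congr hproj_ae.symm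
  -- restriction bookkeeping
  have hres : ∀ S : Set ℝ, MeasurableSet S →
      mu01.restrict S = volume.restrict (S ∩ Set.Ioo (0:ℝ) 1) := by
    intro S hS
    rw [mu01, Measure.restrict_restrict hS]
  have hIntOn : ∀ y, IntegrableOn h (lvl g y) volume := by
    intro y
    have h1 : IntegrableOn h (lvl g y) mu01 := hint.integrableOn
    rwa [IntegrableOn, hres _ (measurableSet_lvl g hgmeas y),
      Set.inter_eq_self_of_subset_left (lvl_subset g y)] at h1
  have hvne : ∀ y, volume (lvl g y) ≠ ⊤ := by
    intro y
    refine ne_top_of_le_ne_top ?_ (measure_mono (lvl_subset g y))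
    rw [Real.volume_Ioo]
    exact ENNReal.ofReal_ne_top
  -- the per-atom norm bound
  have hatom_bound : ∀ y ∈ C,
      (‖avg y‖₊ : ℝ≥0∞) * volume (lvl g y) ≤ ∫⁻ v in lvl g y, ‖h v‖₊ ∂volume := by
    intro y hy
    have hvpos : 0 < volume (lvl g y) := hy
    have hafin : (∫⁻ v in lvl g y, ‖h v‖₊ ∂volume) ≠ ⊤ := (hIntOn y).2.ne
    have htRpos : 0 < (volume (lvl g y)).toReal :=
      ENNReal.toReal_pos hvpos.ne' (hvne y)
    have hnorm : ‖avg y‖ ≤ (∫⁻ v in lvl g y, ‖h v‖₊ ∂volume).toReal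
        / (volume (lvl g y)).toReal := by
      have h2 : (∫ w in lvl g y, ‖h w‖ ∂volume)
          = (∫⁻ v in lvl g y, ‖h v‖₊ ∂volume).toReal :=
        integral_norm_eq_lintegral_enorm (hmeas.aestronglyMeasurable.restrict)
      have h1 : ‖∫ w in lvl g y, h w ∂volume‖ ≤ (∫⁻ v in lvl g y, ‖h v‖₊ ∂volume).toReal := by
        rw [← h2]
        exact norm_integral_le_integral_norm _
      simp only [havg, Real.norm_eq_abs, abs_div, abs_of_nonneg ENNReal.toReal_nonneg]
      exact div_le_div_of_nonneg_right h1 ENNReal.toReal_nonneg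
    calc (‖avg y‖₊ : ℝ≥0∞) * volume (lvl g y)
        = ENNReal.ofReal (‖avg y‖ * (volume (lvl g y)).toReal) := by
          rw [ENNReal.ofReal_mul (norm_nonneg _), ofReal_norm, enorm_eq_nnnorm,
            ENNReal.ofReal_toReal (hvne y)]
      _ ≤ ENNReal.ofReal ((∫⁻ v in lvl g y, ‖h v‖₊ ∂volume).toReal) := by
          apply ENNReal.ofReal_le_ofReal
          calc ‖avg y‖ * (volume (lvl g y)).toReal
              ≤ ((∫⁻ v in lvl g y, ‖h v‖₊ ∂volume).toReal / (volume (lvl g y)).toReal)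
                * (volume (lvl g y)).toReal := by
                exact mul_le_mul_of_nonneg_right hnorm ENNReal.toReal_nonneg
            _ = (∫⁻ v in lvl g y, ‖h v‖₊ ∂volume).toReal :=
                div_mul_cancel₀ _ (ne_of_gt htRpos)
      _ = ∫⁻ v in lvl g y, ‖h v‖₊ ∂volume := ENNReal.ofReal_toReal hafin
  -- countable unions of atoms
  haveI : Countable ↥C := hCcount.to_subtype
  have hdisjP : Pairwise (Function.onFun Disjoint fun c : ↥C => lvl g (c : ℝ)) :=
    fun c c' hne => lvl_disjoint g (Subtype.coe_injective.ne hne)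
  have hUnion : ∀ B : Set ℝ, (g ⁻¹' B ∩ g ⁻¹' C) ∩ Set.Ioo (0:ℝ) 1
      = ⋃ c : ↥C, (lvl g (c : ℝ) ∩ g ⁻¹' B) := by
    intro B
    ext u
    simp only [Set.mem_inter_iff, Set.mem_preimage, Set.mem_iUnion, lvl, Set.mem_setOf_eq]
    constructor
    · rintro ⟨⟨huB, huC⟩, huI⟩
      exact ⟨⟨g u, huC⟩, ⟨huI, rfl⟩, huB⟩
    · rintro ⟨⟨c, hc⟩, ⟨huI, hgu⟩, huB⟩
      refine ⟨⟨huB, ?_⟩, huI⟩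
      rw [hgu]; exact hc
  have hUnionP : g ⁻¹' C ∩ Set.Ioo (0:ℝ) 1 = ⋃ c : ↥C, lvl g (c : ℝ) := by
    have := hUnion Set.univ
    simpa using this
  -- integrability of projFun
  have hprojInt : Integrable (projFun g h) mu01 := by
    refine ⟨hASM, ?_⟩
    rw [hasFiniteIntegral_def]
    rw [← lintegral_add_compl (fun u => ‖projFun g h u‖ₑ) hpmeas]
    have hcomp : ∫⁻ u in (g ⁻¹' C)ᶜ, ‖projFun g h u‖₊ ∂mu01 ≤ ∫⁻ u, ‖h u‖₊ ∂mu01 := by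
      have heq : ∫⁻ u in ((g ⁻¹' C)ᶜ ∩ Set.Ioo (0:ℝ) 1), ‖projFun g h u‖₊ ∂volume
          = ∫⁻ u in ((g ⁻¹' C)ᶜ ∩ Set.Ioo (0:ℝ) 1), ‖h u‖₊ ∂volume := by
        refine setLIntegral_congr_fun (hpmeas.compl.inter measurableSet_Ioo) ?_
        intro u hu
        simp only [hproj_h u hu.2 hu.1]
      rw [hres _ hpmeas.compl, heq, ← hres _ hpmeas.compl]
      exact setLIntegral_le_lintegral _ _
    have hatom : ∫⁻ u in g ⁻¹' C, ‖projFun g h u‖₊ ∂mu01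
        ≤ ∫⁻ u in g ⁻¹' C, ‖h u‖₊ ∂mu01 := by
      rw [hres _ hpmeas, hUnionP,
        lintegral_iUnion (fun c => measurableSet_lvl g hgmeas _) hdisjP,
        lintegral_iUnion (fun c => measurableSet_lvl g hgmeas _) hdisjP]
      refine ENNReal.tsum_le_tsum fun c => ?_
      have hconst : ∫⁻ u in lvl g (c : ℝ), ‖projFun g h u‖₊ ∂volume
          = (‖avg (c : ℝ)‖₊ : ℝ≥0∞) * volume (lvl g (c : ℝ)) := by
        rw [setLIntegral_congr_fun (measurableSet_lvl g hgmeas _)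
          (fun u hu => by rw [hproj_const (c : ℝ) c.2 u hu]),
          setLIntegral_const]
      rw [hconst]
      exact hatom_bound (c : ℝ) c.2
    refine lt_of_le_of_lt (add_le_add (hatom.trans (setLIntegral_le_lintegral _ _)) hcomp) ?_
    have hfin : (∫⁻ u, ‖h u‖₊ ∂mu01) < ⊤ := hint.2
    exact ENNReal.add_lt_top.2 ⟨hfin, hfin⟩
  -- the set-integral characterization
  have hg_eq : ∀ s : Set ℝ, MeasurableSet[sigAlg g] s → mu01 s < ⊤ →
      ∫ x in s, projFun g h x ∂mu01 = ∫ x in s, h x ∂mu01 := by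
    intro s hs _
    obtain ⟨B, hBmeas, rfl⟩ := hs
    have hB : MeasurableSet B := hBmeas
    have hsmeas : MeasurableSet (g ⁻¹' B) := hgmeas hB
    have hTmeas : ∀ c : ↥C, MeasurableSet (lvl g (c : ℝ) ∩ g ⁻¹' B) :=
      fun c => (measurableSet_lvl g hgmeas _).inter hsmeas
    have hTdisj : Pairwise (Function.onFun Disjoint fun c : ↥C => lvl g (c : ℝ) ∩ g ⁻¹' B) :=
      fun c c' hne => ((hdisjP hne).mono Set.inter_subset_left Set.inter_subset_left)
    rw [← integral_inter_add_diff hpmeas hprojInt.integrableOn,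
      ← integral_inter_add_diff hpmeas hint.integrableOn]
    have hrw : mu01.restrict (g ⁻¹' B ∩ g ⁻¹' C)
        = volume.restrict (⋃ c : ↥C, (lvl g (c : ℝ) ∩ g ⁻¹' B)) := by
      rw [hres _ (hsmeas.inter hpmeas), hUnion B]
    congr 1
    · -- on the atoms
      have hIint : IntegrableOn h (⋃ c : ↥C, (lvl g (c : ℝ) ∩ g ⁻¹' B)) volume := by
        have h1 : IntegrableOn h (g ⁻¹' B ∩ g ⁻¹' C) mu01 := hint.integrableOn
        rwa [IntegrableOn, hrw] at h1
      have hPint : IntegrableOn (projFun g h) (⋃ c : ↥C, (lvl g (c : ℝ) ∩ g ⁻¹' B))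
          volume := by
        have h1 : IntegrableOn (projFun g h) (g ⁻¹' B ∩ g ⁻¹' C) mu01 :=
          hprojInt.integrableOn
        rwa [IntegrableOn, hrw] at h1
      calc ∫ x in g ⁻¹' B ∩ g ⁻¹' C, projFun g h x ∂mu01
          = ∫ x in ⋃ c : ↥C, (lvl g (c : ℝ) ∩ g ⁻¹' B), projFun g h x ∂volume := by
            rw [hrw]
        _ = ∑' c : ↥C, ∫ x in lvl g (c : ℝ) ∩ g ⁻¹' B, projFun g h x ∂volume :=
            integral_iUnion hTmeas hTdisj hPint
        _ = ∑' c : ↥C, ∫ x in lvl g (c : ℝ) ∩ g ⁻¹' B, h x ∂volume := by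
            refine tsum_congr fun c => ?_
            by_cases hcB : (c : ℝ) ∈ B
            · have hfull : lvl g (c : ℝ) ∩ g ⁻¹' B = lvl g (c : ℝ) :=
                Set.inter_eq_self_of_subset_left
                  (fun v hv => by rw [Set.mem_preimage, hv.2]; exact hcB)
              rw [hfull]
              have h1 : ∫ x in lvl g (c : ℝ), projFun g h x ∂volume
                  = (volume (lvl g (c : ℝ))).toReal • avg (c : ℝ) := by
                rw [setIntegral_congr_fun (measurableSet_lvl g hgmeas _)
                  (fun u hu => hproj_const _ c.2 u hu), setIntegral_const, measureReal_def]
              rw [h1, havg]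
              simp only
              rw [smul_eq_mul, mul_comm, div_mul_cancel₀]
              exact ne_of_gt (ENNReal.toReal_pos (ne_of_gt (show (0:ℝ≥0∞) <
                volume (lvl g (c : ℝ)) from c.2)) (hvne _))
            · have hempty : lvl g (c : ℝ) ∩ g ⁻¹' B = ∅ := by
                ext v
                simp only [Set.mem_inter_iff, Set.mem_empty_iff_false, iff_false, not_and]
                intro hv hvB
                rw [Set.mem_preimage, hv.2] at hvB
                exact hcB hvB
              rw [hempty]
              simp
        _ = ∫ x in ⋃ c : ↥C, (lvl g (c : ℝ) ∩ g ⁻¹' B), h x ∂volume :=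
            (integral_iUnion hTmeas hTdisj hIint).symm
        _ = ∫ x in g ⁻¹' B ∩ g ⁻¹' C, h x ∂mu01 := by rw [hrw]
    · -- off the atoms
      rw [hres _ (hsmeas.diff hpmeas)]
      refine setIntegral_congr_fun ((hsmeas.diff hpmeas).inter measurableSet_Ioo) ?_
      intro u hu
      exact hproj_h u hu.2 hu.1.2
  -- conclude via the characterization of conditional expectation
  haveI : SigmaFinite (mu01.trim hm) := by
    haveI : IsFiniteMeasure (mu01.trim hm) := isFiniteMeasure_trim hm
    infer_instance
  exact ae_eq_condExp_of_forall_setIntegral_eq hm hint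
    (fun s _ _ => hprojInt.integrableOn) hg_eq hASM'

/-- for `g` nondecreasing and càdlàg on `(0,1)` and `h ∈ L²(0,1)`,
the function `h_g` coincides a.e. with the conditional expectation of `h` given the
σ-algebra generated by `g`, i.e. with the orthogonal projection of `h` onto `L₂(g)`. -/
theorem stmt1 (g h : ℝ → ℝ) (hgmono : MonotoneOn g (Set.Ioo (0:ℝ) 1))
    (hgr : ∀ u ∈ Set.Ioo (0:ℝ) 1, ContinuousWithinAt g (Set.Ici u) u)
    (hgmeas : Measurable g)
    (hh : MemLp h 2 mu01) :
    projFun g h =ᵐ[mu01] mu01[h | MeasurableSpace.comap g (borel ℝ)] := by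
  classical
  have hae : h =ᵐ[mu01] hh.1.mk h := hh.1.ae_eq_mk
  have hint' : Integrable (hh.1.mk h) mu01 := (hh.integrable one_le_two).congr hae
  calc projFun g h =ᵐ[mu01] projFun g (hh.1.mk h) := projFun_congr_ae hae
    _ =ᵐ[mu01] mu01[hh.1.mk h | MeasurableSpace.comap g (borel ℝ)] :=
        projFun_ae_eq_condexp g (hh.1.mk h) hgmono hgmeas hh.1.stronglyMeasurable_mk hint'
    _ =ᵐ[mu01] mu01[h | MeasurableSpace.comap g (borel ℝ)] := condExp_congr_ae hae.symm

end
end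

section
/- Let g : (0,1) → ℝ be nondecreasing and càdlàg, and let h : (0,1) → ℝ be nondecreasing and square-integrable. Then the orthogonal projection pr_g h of h onto the subspace of σ(g)-measurable square-integrable functions has a nondecreasing modification. -/
open MeasureTheory Set
open scoped ENNReal NNReal

noncomputable section

instance inst_s2 : IsFiniteMeasure mu01 := by
  unfold mu01
  infer_instance

/-- A function equal to a measurable function off a countable set is measurable. -/
lemma measurable_of_eq_off_countable {f g : ℝ → ℝ} {D : Set ℝ} (hD : D.Countable)
    (hg : Measurable g) (hfg : ∀ x ∉ D, f x = g x) : Measurable f := by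
  intro B hB
  have hset : f ⁻¹' B = (D ∩ f ⁻¹' B) ∪ (Dᶜ ∩ g ⁻¹' B) := by
    ext x
    by_cases hx : x ∈ D
    · simp [hx]
    · simp [hx, Set.mem_preimage, hfg x hx]
  rw [hset]
  exact ((hD.mono inter_subset_left).measurableSet).union
    ((hD.measurableSet.compl).inter (hg hB))

/-- The restriction of a function monotone on `(0,1)` to a measurable subset is measurable. -/
lemma measurable_restrict_of_monotoneOn {h : ℝ → ℝ} (hhmono : MonotoneOn h (Set.Ioo (0:ℝ) 1))
    {N : Set ℝ} (hNsub : N ⊆ Set.Ioo (0:ℝ) 1) (hNm : MeasurableSet N) :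
    Measurable (fun x : N => h ↑x) := by
  apply measurable_of_Iio
  intro t
  set A : Set ℝ := {u | u ∈ N ∧ h u < t} with hA
  have hpre : (fun x : N => h ↑x) ⁻¹' Iio t = Subtype.val ⁻¹' A := by
    ext x
    simp [hA, x.2]
  rw [hpre]
  rcases eq_empty_or_nonempty A with hAe | hAne
  · rw [hAe]; simp
  have hbdd : BddAbove A := ⟨1, fun u hu => (hNsub hu.1).2.le⟩
  by_cases hsA : sSup A ∈ A
  · have hAeq : A = N ∩ Iic (sSup A) := by
      apply subset_antisymm
      · exact fun u hu => ⟨hu.1, le_csSup hbdd hu⟩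
      · rintro u ⟨huN, hus⟩
        rcases lt_or_eq_of_le (Set.mem_Iic.mp hus) with hl | he
        · exact ⟨huN, lt_of_le_of_lt (hhmono (hNsub huN) (hNsub hsA.1) hl.le) hsA.2⟩
        · rw [he]; exact hsA
    rw [hAeq]
    exact measurable_subtype_coe (hNm.inter measurableSet_Iic)
  · have hAeq : A = N ∩ Iio (sSup A) := by
      apply subset_antisymm
      · refine fun u hu => ⟨hu.1, lt_of_le_of_ne (le_csSup hbdd hu) ?_⟩
        intro he
        exact hsA (he ▸ hu)
      · rintro u ⟨huN, hus⟩
        obtain ⟨v, hvA, huv⟩ := exists_lt_of_lt_csSup hAne (Set.mem_Iio.mp hus)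
        exact ⟨huN, lt_of_le_of_lt (hhmono (hNsub huN) (hNsub hvA.1) huv.le) hvA.2⟩
    rw [hAeq]
    exact measurable_subtype_coe (hNm.inter measurableSet_Iio)

/-- if `g` is nondecreasing and càdlàg on `(0,1)` and `h` is a
nondecreasing square-integrable function, then the orthogonal projection
`pr_g h = E(h | σ(g))` of `h` onto the σ(g)-measurable square-integrable functions
has a nondecreasing modification. -/
theorem stmt2 (g h : ℝ → ℝ) (hgmono : MonotoneOn g (Set.Ioo (0:ℝ) 1))
    (hgr : ∀ u ∈ Set.Ioo (0:ℝ) 1, ContinuousWithinAt g (Set.Ici u) u)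
    (hgmeas : Measurable g)
    (hhmono : MonotoneOn h (Set.Ioo (0:ℝ) 1))
    (hh : MemLp h 2 mu01) :
    ∃ f : ℝ → ℝ, MonotoneOn f (Set.Ioo (0:ℝ) 1) ∧
      mu01[h | MeasurableSpace.comap g (borel ℝ)] =ᵐ[mu01] f := by
  classical
  have hIm : MeasurableSet (Set.Ioo (0:ℝ) 1) := measurableSet_Ioo
  set T : ℝ → Set ℝ := fun c => g ⁻¹' {c} with hT
  have hTmeas : ∀ c, MeasurableSet (T c) := fun c => hgmeas (measurableSet_singleton c)
  have hTtop : ∀ c, mu01 (T c) ≠ ⊤ := fun c => measure_ne_top _ _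
  have hmu_apply : ∀ s : Set ℝ, MeasurableSet s → mu01 s = volume (s ∩ Set.Ioo 0 1) := by
    intro s hs
    unfold mu01
    exact Measure.restrict_apply hs
  have hae01 : ∀ᵐ x ∂mu01, x ∈ Set.Ioo (0:ℝ) 1 := by
    unfold mu01
    exact ae_restrict_mem measurableSet_Ioo
  -- atoms are order-connected within (0,1)
  have hIcc : ∀ (c : ℝ) ⦃a b x : ℝ⦄, g a = c → a ∈ Set.Ioo (0:ℝ) 1 → g b = c →
      b ∈ Set.Ioo (0:ℝ) 1 → x ∈ Icc a b → g x = c ∧ x ∈ Set.Ioo (0:ℝ) 1 := by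
    intro c a b x hag haI hbg hbI hx
    have hxI : x ∈ Set.Ioo (0:ℝ) 1 := ⟨lt_of_lt_of_le haI.1 hx.1, lt_of_le_of_lt hx.2 hbI.2⟩
    exact ⟨le_antisymm (hbg ▸ hgmono hxI hbI hx.2) (hag ▸ hgmono haI hxI hx.1), hxI⟩
  -- an atom with two distinct points in (0,1) has positive measure
  have hpos_of_two : ∀ (c : ℝ) ⦃a b : ℝ⦄, g a = c → a ∈ Set.Ioo (0:ℝ) 1 → g b = c →
      b ∈ Set.Ioo (0:ℝ) 1 → a < b → mu01 (T c) ≠ 0 := by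
    intro c a b hag haI hbg hbI hab h0
    have hsub : Icc a b ⊆ T c ∩ Set.Ioo 0 1 := by
      intro x hx
      obtain ⟨h1, h2⟩ := hIcc c hag haI hbg hbI hx
      exact ⟨h1, h2⟩
    have hle : volume (Icc a b) ≤ mu01 (T c) := by
      rw [hmu_apply _ (hTmeas c)]
      exact measure_mono hsub
    rw [h0, le_zero_iff, Real.volume_Icc, ENNReal.ofReal_eq_zero] at hle
    linarith
  set D : Set ℝ := {c | mu01 (T c) ≠ 0} with hD
  have hDc : D.Countable := by
    have hex : ∀ c ∈ D, ∃ q : ℚ, g (q : ℝ) = c := by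
      intro c hc
      have hnt : (T c ∩ Set.Ioo (0:ℝ) 1).Nontrivial := by
        by_contra hcon
        rw [Set.not_nontrivial_iff] at hcon
        have : mu01 (T c) = 0 := by
          rw [hmu_apply _ (hTmeas c)]
          exact hcon.measure_zero _
        exact hc this
      obtain ⟨a, ha, b, hb, hne⟩ := hnt
      rcases hne.lt_or_gt with hab | hab
      · obtain ⟨q, hq1, hq2⟩ := exists_rat_btwn hab
        exact ⟨q, (hIcc c ha.1 ha.2 hb.1 hb.2 ⟨hq1.le, hq2.le⟩).1⟩
      · obtain ⟨q, hq1, hq2⟩ := exists_rat_btwn hab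
        exact ⟨q, (hIcc c hb.1 hb.2 ha.1 ha.2 ⟨hq1.le, hq2.le⟩).1⟩
    choose! q hq using hex
    have hsub : D ⊆ Set.range (fun r : ℚ => g (r : ℝ)) := fun c hc => ⟨q c, hq c hc⟩
    exact (Set.countable_range _).mono hsub
  set α : ℝ → ℝ := fun c => (mu01 (T c)).toReal⁻¹ * ∫ x in T c, h x ∂mu01 with hα
  set N : Set ℝ := {u | u ∈ Set.Ioo (0:ℝ) 1 ∧ g u ∉ D} with hN
  have hNsub : N ⊆ Set.Ioo (0:ℝ) 1 := fun u hu => hu.1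
  have hNmeas : MeasurableSet N := by
    have : N = Set.Ioo (0:ℝ) 1 ∩ g ⁻¹' Dᶜ := rfl
    rw [this]
    exact hIm.inter (hgmeas hDc.measurableSet.compl)
  haveI : StandardBorelSpace N := hNmeas.standardBorel
  have hginjOn : ∀ a b : ℝ, a ∈ N → b ∈ N → g a = g b → a = b := by
    intro a b ha hb hab
    by_contra hne
    rcases Ne.lt_or_gt hne with hl | hl
    · exact ha.2 (hpos_of_two (g a) rfl ha.1 hab.symm hb.1 hl)
    · exact ha.2 (hpos_of_two (g a) hab.symm hb.1 rfl ha.1 hl)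
  have hginj : Function.Injective (fun x : N => g ↑x) :=
    fun x y hxy => Subtype.ext (hginjOn _ _ x.2 y.2 hxy)
  have hhNmeas := measurable_restrict_of_monotoneOn hhmono hNsub hNmeas
  have hemb : MeasurableEmbedding (fun x : N => g ↑x) :=
    (hgmeas.comp measurable_subtype_coe).measurableEmbedding hginj
  obtain ⟨ψ, hψmeas, hψ⟩ := hemb.exists_measurable_extend hhNmeas (fun _ => ⟨(0:ℝ)⟩)
  set φ : ℝ → ℝ := fun c => if c ∈ D then α c else ψ c with hφ
  have hφmeas : Measurable φ := measurable_of_eq_off_countable hDc hψmeas (fun c hc => if_neg hc)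
  set f : ℝ → ℝ := fun u => φ (g u) with hf
  have hfD : ∀ u, g u ∈ D → f u = α (g u) := fun u hu => if_pos hu
  have hfN : ∀ u, u ∈ Set.Ioo (0:ℝ) 1 → g u ∉ D → f u = h u := by
    intro u huI huD
    have h1 : f u = ψ (g u) := if_neg huD
    rw [h1]
    exact congrFun hψ ⟨u, huI, huD⟩
  have hhint : Integrable h mu01 := hh.integrable (by norm_num)
  have hres : ∀ c, mu01.restrict (T c) = volume.restrict (T c ∩ Set.Ioo 0 1) := by
    intro c
    unfold mu01
    exact Measure.restrict_restrict (hTmeas c)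
  have hposT : ∀ c ∈ D, 0 < (mu01 (T c)).toReal := fun c hc =>
    ENNReal.toReal_pos hc (hTtop c)
  -- key inequality
  have claim1 : ∀ u ∈ Set.Ioo (0:ℝ) 1, ∀ b ∈ Set.Ioo (0:ℝ) 1, g u < g b → f u ≤ h b := by
    intro u hu b hb hgub
    by_cases hud : g u ∈ D
    · rw [hfD u hud]
      have hae : ∀ᵐ x ∂mu01.restrict (T (g u)), h x ≤ h b := by
        rw [hres]
        refine (ae_restrict_iff' ((hTmeas _).inter hIm)).mpr (ae_of_all _ ?_)
        rintro x ⟨hxT, hxI⟩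
        have hxb : x ≤ b := by
          by_contra hxb
          push_neg at hxb
          have hgb : g b ≤ g x := hgmono hb hxI hxb.le
          rw [show g x = g u from hxT] at hgb
          exact absurd (lt_of_lt_of_le hgub hgb) (lt_irrefl _)
        exact hhmono hxI hb hxb
      have hint1 : IntegrableOn h (T (g u)) mu01 := hhint.integrableOn
      have hint2 : IntegrableOn (fun _ => h b) (T (g u)) mu01 := (integrable_const _).integrableOn
      have hmono := setIntegral_mono_ae_restrict hint1 hint2 hae
      rw [setIntegral_const] at hmono
      have hpos := hposT _ hud
      simp only [hα]
      calc (mu01 (T (g u))).toReal⁻¹ * ∫ x in T (g u), h x ∂mu01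
          ≤ (mu01 (T (g u))).toReal⁻¹ * ((mu01 (T (g u))).toReal * h b) := by
            apply mul_le_mul_of_nonneg_left _ (inv_nonneg.mpr hpos.le)
            simpa [smul_eq_mul, Measure.real] using hmono
        _ = h b := by field_simp
    · rw [hfN u hu hud]
      have hub : u ≤ b := by
        by_contra hc
        push_neg at hc
        exact absurd (lt_of_lt_of_le hgub (hgmono hb hu hc.le)) (lt_irrefl _)
      exact hhmono hu hb hub
  -- monotonicity
  have hmonoF : MonotoneOn f (Set.Ioo (0:ℝ) 1) := by
    intro u hu v hv huv
    rcases eq_or_lt_of_le (hgmono hu hv huv) with he | hl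
    · have : f u = f v := by simp only [hf]; rw [he]
      exact this.le
    · by_cases hvd : g v ∈ D
      · rw [hfD v hvd]
        have hae : ∀ᵐ x ∂mu01.restrict (T (g v)), (fun _ => f u) x ≤ h x := by
          rw [hres]
          refine (ae_restrict_iff' ((hTmeas _).inter hIm)).mpr (ae_of_all _ ?_)
          rintro x ⟨hxT, hxI⟩
          exact claim1 u hu x hxI (by rw [show g x = g v from hxT]; exact hl)
        have hint1 : IntegrableOn (fun _ => f u) (T (g v)) mu01 := (integrable_const _).integrableOn
        have hint2 : IntegrableOn h (T (g v)) mu01 := hhint.integrableOn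
        have hmono := setIntegral_mono_ae_restrict hint1 hint2 hae
        rw [setIntegral_const] at hmono
        have hpos := hposT _ hvd
        simp only [hα]
        calc f u = (mu01 (T (g v))).toReal⁻¹ * ((mu01 (T (g v))).toReal * f u) := by field_simp
          _ ≤ (mu01 (T (g v))).toReal⁻¹ * ∫ x in T (g v), h x ∂mu01 := by
              apply mul_le_mul_of_nonneg_left _ (inv_nonneg.mpr hpos.le)
              simpa [smul_eq_mul, Measure.real] using hmono
      · rw [hfN v hv hvd]
        exact claim1 u hu v hv hl
  -- integrability of f
  set P : Set ℝ := g ⁻¹' D with hP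
  have hPmeas : MeasurableSet P := hgmeas hDc.measurableSet
  haveI : Countable ↥D := hDc.to_subtype
  have hdisjD : Pairwise (Function.onFun Disjoint (fun c : D => T (c : ℝ))) := by
    intro c c' hne
    apply Set.disjoint_left.mpr
    rintro x hx hx'
    exact hne (Subtype.ext ((show g x = (c : ℝ) from hx).symm.trans hx'))
  have hPunion : P = ⋃ c : D, T (c : ℝ) := by
    ext u
    simp only [hP, Set.mem_preimage, Set.mem_iUnion]
    constructor
    · intro hu
      exact ⟨⟨g u, hu⟩, rfl⟩
    · rintro ⟨c, hc⟩
      rw [show g u = (c : ℝ) from hc]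
      exact c.2
  have hfmeas : Measurable f := hφmeas.comp hgmeas
  have hatom_bound : ∀ c : D, ∫⁻ x in T (c : ℝ), ‖f x‖₊ ∂mu01 ≤ ∫⁻ x in T (c : ℝ), ‖h x‖₊ ∂mu01 := by
    intro c
    have hfc : ∀ x ∈ T (c : ℝ), f x = α (c : ℝ) := by
      intro x hx
      simp only [hf]
      rw [show g x = (c : ℝ) from hx]
      exact if_pos c.2
    have h1 : ∫⁻ x in T (c : ℝ), ‖f x‖₊ ∂mu01 = ‖α (c : ℝ)‖₊ * mu01 (T (c : ℝ)) := by
      rw [setLIntegral_congr_fun (g := fun _ => (‖α (c : ℝ)‖₊ : ℝ≥0∞)) (hTmeas _) (fun x hx => by simp only [hfc x hx])]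
      exact setLIntegral_const _ _
    have h2 : ENNReal.ofReal (∫ x in T (c : ℝ), ‖h x‖ ∂mu01) = ∫⁻ x in T (c : ℝ), ‖h x‖₊ ∂mu01 :=
      ofReal_integral_norm_eq_lintegral_enorm hhint.integrableOn
    rw [h1, ← h2]
    have hnorm : ‖α (c : ℝ)‖ ≤ (mu01 (T (c : ℝ))).toReal⁻¹ * ∫ x in T (c : ℝ), ‖h x‖ ∂mu01 := by
      simp only [hα]
      calc ‖(mu01 (T (c : ℝ))).toReal⁻¹ * ∫ x in T (c : ℝ), h x ∂mu01‖
          = (mu01 (T (c : ℝ))).toReal⁻¹ * ‖∫ x in T (c : ℝ), h x ∂mu01‖ := by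
            rw [norm_mul, Real.norm_eq_abs ((mu01 (T (c : ℝ))).toReal⁻¹),
              abs_of_nonneg (inv_nonneg.mpr ENNReal.toReal_nonneg)]
        _ ≤ (mu01 (T (c : ℝ))).toReal⁻¹ * ∫ x in T (c : ℝ), ‖h x‖ ∂mu01 :=
            mul_le_mul_of_nonneg_left (norm_integral_le_integral_norm _)
              (inv_nonneg.mpr ENNReal.toReal_nonneg)
    have hμpos := hposT _ c.2
    rw [show ((‖α (c : ℝ)‖₊ : ℝ≥0∞)) = ENNReal.ofReal ‖α (c : ℝ)‖ from
      (ENNReal.ofReal_eq_coe_nnreal (norm_nonneg _)).symm]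
    rw [← ENNReal.ofReal_toReal (hTtop (c : ℝ)), ← ENNReal.ofReal_mul (norm_nonneg _)]
    apply ENNReal.ofReal_le_ofReal
    calc ‖α (c : ℝ)‖ * (mu01 (T (c : ℝ))).toReal
        ≤ ((mu01 (T (c : ℝ))).toReal⁻¹ * ∫ x in T (c : ℝ), ‖h x‖ ∂mu01) * (mu01 (T (c : ℝ))).toReal :=
          mul_le_mul_of_nonneg_right hnorm ENNReal.toReal_nonneg
      _ = ∫ x in T (c : ℝ), ‖h x‖ ∂mu01 := by
          rw [mul_comm ((mu01 (T (c : ℝ))).toReal⁻¹) _, mul_assoc,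
            inv_mul_cancel₀ hμpos.ne', mul_one]
  have hfint : Integrable f mu01 := by
    refine ⟨hfmeas.aestronglyMeasurable, ?_⟩
    have key : (∫⁻ x, ‖f x‖₊ ∂mu01) < ⊤ := by
      rw [← lintegral_add_compl (fun x => (‖f x‖₊ : ℝ≥0∞)) hPmeas]
      have hhfin : (∫⁻ x, ‖h x‖₊ ∂mu01) < ⊤ := hhint.2
      have hPc : ∫⁻ x in Pᶜ, ‖f x‖₊ ∂mu01 ≤ ∫⁻ x, ‖h x‖₊ ∂mu01 := by
        have heq : ∫⁻ x in Pᶜ, ‖f x‖₊ ∂mu01 = ∫⁻ x in Pᶜ, ‖h x‖₊ ∂mu01 := by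
          apply setLIntegral_congr_fun_ae hPmeas.compl
          filter_upwards [hae01] with x hxI hxPc
          rw [hfN x hxI hxPc]
        rw [heq]
        exact lintegral_mono' Measure.restrict_le_self le_rfl
      have hPp : ∫⁻ x in P, ‖f x‖₊ ∂mu01 ≤ ∫⁻ x, ‖h x‖₊ ∂mu01 := by
        rw [hPunion, lintegral_iUnion (fun c => hTmeas _) hdisjD]
        calc ∑' c : D, ∫⁻ x in T (c : ℝ), ‖f x‖₊ ∂mu01
            ≤ ∑' c : D, ∫⁻ x in T (c : ℝ), ‖h x‖₊ ∂mu01 := ENNReal.tsum_le_tsum hatom_bound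
          _ = ∫⁻ x in ⋃ c : D, T (c : ℝ), ‖h x‖₊ ∂mu01 :=
              (lintegral_iUnion (fun c => hTmeas _) hdisjD _).symm
          _ ≤ ∫⁻ x, ‖h x‖₊ ∂mu01 := lintegral_mono' Measure.restrict_le_self le_rfl
      exact lt_of_le_of_lt (add_le_add hPp hPc) (ENNReal.add_lt_top.mpr ⟨hhfin, hhfin⟩)
    exact key
  -- set-integral equality on σ(g)-measurable sets
  have hseteq : ∀ s, MeasurableSet[MeasurableSpace.comap g (borel ℝ)] s →
      ∫ x in s, f x ∂mu01 = ∫ x in s, h x ∂mu01 := by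
    intro s hs
    obtain ⟨B, hB, rfl⟩ := MeasurableSpace.measurableSet_comap.mp hs
    have hBm : MeasurableSet B := hB
    have hsplitf := (integral_inter_add_diff (t := P) (s := g ⁻¹' B) hPmeas
      hfint.integrableOn).symm
    have hsplith := (integral_inter_add_diff (t := P) (s := g ⁻¹' B) hPmeas
      hhint.integrableOn).symm
    rw [hsplitf, hsplith]
    congr 1
    · haveI : Countable ↥(D ∩ B) := (hDc.mono inter_subset_left).to_subtype
      have hU : g ⁻¹' B ∩ P = ⋃ c : ↥(D ∩ B), T (c : ℝ) := by
        ext u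
        simp only [hP, Set.mem_inter_iff, Set.mem_preimage, Set.mem_iUnion]
        constructor
        · rintro ⟨huB, huD⟩
          exact ⟨⟨g u, huD, huB⟩, rfl⟩
        · rintro ⟨c, hc⟩
          rw [show g u = (c : ℝ) from hc]
          exact ⟨c.2.2, c.2.1⟩
      have hdisj' : Pairwise (Function.onFun Disjoint (fun c : ↥(D ∩ B) => T (c : ℝ))) := by
        intro c c' hne
        apply Set.disjoint_left.mpr
        rintro x hx hx'
        exact hne (Subtype.ext ((show g x = (c : ℝ) from hx).symm.trans hx'))
      rw [hU, integral_iUnion (fun c => hTmeas _) hdisj' hfint.integrableOn,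
        integral_iUnion (fun c => hTmeas _) hdisj' hhint.integrableOn]
      apply tsum_congr
      intro c
      have hcD : (c : ℝ) ∈ D := c.2.1
      have hfc : Set.EqOn f (fun _ => α (c : ℝ)) (T (c : ℝ)) := by
        intro x hx
        simp only [hf]
        rw [show g x = (c : ℝ) from hx]
        exact if_pos hcD
      rw [setIntegral_congr_fun (hTmeas _) hfc, setIntegral_const]
      simp only [hα, smul_eq_mul, Measure.real]
      rw [← mul_assoc, mul_inv_cancel₀ (hposT _ hcD).ne', one_mul]
    · apply setIntegral_congr_ae ((hgmeas hBm).diff hPmeas)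
      filter_upwards [hae01] with x hxI hxs
      exact hfN x hxI hxs.2
  -- measurability of f w.r.t. σ(g)
  have hgm' : @Measurable ℝ ℝ (MeasurableSpace.comap g (borel ℝ)) (borel ℝ) g :=
    fun t ht => MeasurableSpace.measurableSet_comap.mpr ⟨t, ht, rfl⟩
  have hfm' : @Measurable ℝ ℝ (MeasurableSpace.comap g (borel ℝ)) _ f :=
    hφmeas.comp hgm'
  have hmeas' : AEStronglyMeasurable[MeasurableSpace.comap g (borel ℝ)] f mu01 :=
    StronglyMeasurable.aestronglyMeasurable hfm'.stronglyMeasurable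
  have hm : MeasurableSpace.comap g (borel ℝ) ≤ (inferInstance : MeasurableSpace ℝ) := by
    intro s hs
    obtain ⟨B, hB, rfl⟩ := MeasurableSpace.measurableSet_comap.mp hs
    exact hgmeas hB
  haveI : SigmaFinite (mu01.trim hm) := by infer_instance
  exact ⟨f, hmonoF, (ae_eq_condExp_of_forall_setIntegral_eq hm hhint
    (fun s _ _ => hfint.integrableOn) (fun s hs _ => hseteq s hs) hmeas').symm⟩
end
end

section
/- Let g ∈ L²(0,1) have a nondecreasing modification, and define m_g(u) = leb{v ∈ (0,1) : g(u) = g(v)}. Then the squared Hilbert–Schmidt norm of the projection pr_g onto L₂(g) equals ∫₀¹ du / m_g(u), and this also equals the number #g of distinct values taken by the càdlàg nondecreasing modification of g (with the conventions 1/0 = ∞ and that the integral is +∞ if m_g(u) = 0 on a set of positive measure). In particular, ‖pr_g‖_HS < ∞ if and only if the càdlàg modification of g is a step function with finitely many values. -/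
open MeasureTheory Set ENNReal
open RealInnerProductSpace

noncomputable section

/-- The Hilbert space `L²((0,1), Lebesgue)`. -/
abbrev H := Lp ℝ 2 mu01

/-- The closed subspace `L₂(g)` of (a.e.) `σ(g)`-measurable functions in `L²`. -/
abbrev Lg (g : ℝ → ℝ) : Submodule ℝ H :=
  lpMeas ℝ ℝ (MeasurableSpace.comap g Real.measurableSpace) 2 mu01

/-- The orthogonal projection `pr_g` of `L²` onto `L₂(g)`, as an operator on `L²`. -/
def projOp (g : ℝ → ℝ) (hg : Measurable g) : H →L[ℝ] H :=
  haveI : Fact (MeasurableSpace.comap g Real.measurableSpace ≤ Real.measurableSpace) :=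
    ⟨hg.comap_le⟩
  (Lg g).subtypeL.comp ((Lg g).orthogonalProjectionOnto)

section Spectral
variable {E : Type*} [NormedAddCommGroup E] [InnerProductSpace ℝ E] [CompleteSpace E]
  {ι J : Type*} {K : Submodule ℝ E}

lemma enn_norm_sq (x : E) : ((‖x‖₊ : ℝ≥0∞))^2 = ENNReal.ofReal (‖x‖^2) := by
  rw [ENNReal.ofReal_pow (norm_nonneg _), ofReal_norm_eq_enorm]; rfl

lemma parseval_enn (b : HilbertBasis ι ℝ E) (x : E) :
    ∑' i, ENNReal.ofReal (‖⟪b i, x⟫‖^2) = ENNReal.ofReal (‖x‖^2) := by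
  rw [← ENNReal.ofReal_tsum_of_nonneg (fun i => by positivity)
      (b.orthonormal.inner_products_summable x)]
  congr 1
  have h := b.tsum_inner_mul_inner x x
  rw [← real_inner_self_eq_norm_sq x, ← h]
  congr 1; funext i
  rw [real_inner_comm x (b i), Real.norm_eq_abs, sq_abs]
  ring

lemma inner_proj_eq [K.HasOrthogonalProjection] {v : E} (hv : v ∈ K) (x : E) :
    ⟪v, ((K.orthogonalProjectionOnto x : K) : E)⟫ = ⟪v, x⟫ := by
  have h := Submodule.inner_orthogonalProjectionOnto_eq_of_mem_left (K := K) ⟨v, hv⟩ x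
  rw [Submodule.coe_inner] at h
  exact h

lemma hs_ge [K.HasOrthogonalProjection] (b : HilbertBasis ι ℝ E) {f : J → E}
    (hf : Orthonormal ℝ f) (hfK : ∀ j, f j ∈ K) (s : Finset J) :
    (s.card : ℝ≥0∞) ≤ ∑' i, ENNReal.ofReal (‖((K.orthogonalProjectionOnto (b i) : K) : E)‖^2) := by
  have key : ∀ j, ∑' i, ENNReal.ofReal (‖⟪b i, f j⟫‖^2) = 1 := by
    intro j
    rw [parseval_enn b (f j), hf.1 j]; norm_num
  calc (s.card : ℝ≥0∞) = ∑ j ∈ s, ∑' i, ENNReal.ofReal (‖⟪b i, f j⟫‖^2) := by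
        rw [Finset.sum_congr rfl (fun j _ => key j), Finset.sum_const, nsmul_eq_mul, mul_one]
    _ = ∑' i, ∑ j ∈ s, ENNReal.ofReal (‖⟪b i, f j⟫‖^2) :=
        (Summable.tsum_finsetSum (fun j _ => ENNReal.summable)).symm
    _ ≤ ∑' i, ENNReal.ofReal (‖((K.orthogonalProjectionOnto (b i) : K) : E)‖^2) := by
        refine Summable.tsum_le_tsum (fun i => ?_) ENNReal.summable ENNReal.summable
        rw [← ENNReal.ofReal_sum_of_nonneg (fun j _ => by positivity)]
        apply ENNReal.ofReal_le_ofReal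
        have hb := hf.sum_inner_products_le (x := ((K.orthogonalProjectionOnto (b i) : K) : E)) (s := s)
        refine le_trans (le_of_eq ?_) hb
        refine Finset.sum_congr rfl (fun j _ => ?_)
        rw [inner_proj_eq (hfK j), real_inner_comm]

lemma hs_eq [CompleteSpace K] (b : HilbertBasis ι ℝ E) {f : J → E} (hf : Orthonormal ℝ f)
    (hfK : ∀ j, f j ∈ K) (hsp : K ≤ Submodule.span ℝ (Set.range f)) :
    ∑' i, ENNReal.ofReal (‖((K.orthogonalProjectionOnto (b i) : K) : E)‖^2)
      = ∑' (_ : J), (1:ℝ≥0∞) := by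
  classical
  set f' : J → K := fun j => (⟨f j, hfK j⟩ : K) with hf'def
  have hf' : Orthonormal ℝ f' := by
    rw [orthonormal_iff_ite] at hf ⊢
    intro i j
    have h : ⟪f' i, f' j⟫ = ⟪f i, f j⟫ := rfl
    rw [h]; exact hf i j
  have hsp' : ⊤ ≤ (Submodule.span ℝ (Set.range f')).topologicalClosure := by
    intro y _
    apply Submodule.le_topologicalClosure
    have hy : (y : E) ∈ Submodule.span ℝ (Set.range f) := hsp y.2
    have hrange : Set.range f = K.subtype '' Set.range f' := by
      rw [← Set.range_comp]; rfl
    rw [hrange, ← Submodule.map_span] at hy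
    obtain ⟨z, hz, hzy⟩ := hy
    have hzy' : z = y := Subtype.ext hzy
    rwa [hzy'] at hz
  let c : HilbertBasis J ℝ K := HilbertBasis.mk hf' hsp'
  have hcoe : ∀ j, c j = f' j := fun j => by rw [HilbertBasis.coe_mk]
  calc ∑' i, ENNReal.ofReal (‖((K.orthogonalProjectionOnto (b i) : K) : E)‖^2)
      = ∑' i, ∑' j, ENNReal.ofReal (‖⟪b i, f j⟫‖^2) := by
        refine tsum_congr (fun i => ?_)
        have hnorm : ‖((K.orthogonalProjectionOnto (b i) : K) : E)‖
            = ‖(K.orthogonalProjectionOnto (b i) : K)‖ := rfl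
        rw [hnorm, ← parseval_enn c (K.orthogonalProjectionOnto (b i))]
        refine tsum_congr (fun j => ?_)
        congr 2
        rw [hcoe j]
        have h1 : ⟪f' j, K.orthogonalProjectionOnto (b i)⟫ = ⟪f j, b i⟫ :=
          Submodule.inner_orthogonalProjectionOnto_eq_of_mem_left (K := K) (⟨f j, hfK j⟩ : K) (b i)
        rw [h1, real_inner_comm]
    _ = ∑' j, ∑' i, ENNReal.ofReal (‖⟪b i, f j⟫‖^2) := ENNReal.tsum_comm
    _ = ∑' (_ : J), (1:ℝ≥0∞) := by
        refine tsum_congr (fun j => ?_)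
        rw [parseval_enn b (f j), hf.1 j]; norm_num

end Spectral

section Indicators

lemma mu01_ne_top (S : Set ℝ) : mu01 S ≠ ∞ := by
  have h1 : mu01 S ≤ mu01 univ := measure_mono (subset_univ S)
  have h2 : mu01 univ = 1 := by
    rw [mu01, Measure.restrict_apply_univ, Real.volume_Ioo]
    norm_num
  exact (lt_of_le_of_lt (h1.trans h2.le) one_lt_top).ne

def indL2 (S : Set ℝ) (hS : MeasurableSet S) : H :=
  indicatorConstLp 2 hS (mu01_ne_top S) (1:ℝ)

lemma indL2_coeFn (S : Set ℝ) (hS : MeasurableSet S) :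
    ⇑(indL2 S hS) =ᵐ[mu01] S.indicator (fun _ => (1:ℝ)) :=
  indicatorConstLp_coeFn

lemma indL2_inner (S T : Set ℝ) (hS : MeasurableSet S) (hT : MeasurableSet T) :
    ⟪indL2 S hS, indL2 T hT⟫ = (mu01 (S ∩ T)).toReal := by
  rw [L2.inner_def]
  have h1 : ∫ a, ⟪(indL2 S hS) a, (indL2 T hT) a⟫ ∂mu01
      = ∫ a, (S ∩ T).indicator (fun _ => (1:ℝ)) a ∂mu01 := by
    refine integral_congr_ae ?_
    filter_upwards [indL2_coeFn S hS, indL2_coeFn T hT] with a ha hb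
    rw [show ⟪(indL2 S hS) a, (indL2 T hT) a⟫ = (indL2 S hS) a * (indL2 T hT) a from Real.inner_apply _ _]
    rw [ha, hb, ← inter_indicator_mul]
    simp [Set.indicator]
  rw [h1, integral_indicator_const (1:ℝ) (hS.inter hT), smul_eq_mul, mul_one, measureReal_def]

lemma indL2_mem_Lg {g : ℝ → ℝ} (hgmeas : Measurable g) (B : Set ℝ) (hB : MeasurableSet B) :
    indL2 (g ⁻¹' B) (hgmeas hB) ∈ Lg g := by
  rw [mem_lpMeas_iff_aestronglyMeasurable]
  refine ⟨(g ⁻¹' B).indicator (fun _ => (1:ℝ)), ?_, ?_⟩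
  · exact StronglyMeasurable.indicator stronglyMeasurable_const ⟨B, hB, rfl⟩
  · exact indicatorConstLp_coeFn

/-- normalized indicator of a preimage -/
def normInd (g : ℝ → ℝ) (hgmeas : Measurable g) (B : Set ℝ) (hB : MeasurableSet B) : H :=
  (Real.sqrt ((mu01 (g ⁻¹' B)).toReal))⁻¹ • indL2 (g ⁻¹' B) (hgmeas hB)

lemma normInd_mem_Lg {g : ℝ → ℝ} (hgmeas : Measurable g) (B : Set ℝ) (hB : MeasurableSet B) :
    normInd g hgmeas B hB ∈ Lg g :=
  Submodule.smul_mem _ _ (indL2_mem_Lg hgmeas B hB)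

lemma normInd_orthonormal {g : ℝ → ℝ} (hgmeas : Measurable g) {J : Type*} (I : J → Set ℝ)
    (hI : ∀ j, MeasurableSet (I j)) (hd : Pairwise (Function.onFun Disjoint I))
    (hpos : ∀ j, 0 < mu01 (g ⁻¹' (I j))) :
    Orthonormal ℝ (fun j => normInd g hgmeas (I j) (hI j)) := by
  classical
  rw [orthonormal_iff_ite]
  intro i j
  rw [normInd, normInd, real_inner_smul_left, real_inner_smul_right, indL2_inner]
  by_cases hij : i = j
  · subst hij
    simp only [if_pos rfl, Set.inter_self]
    have hm : 0 < (mu01 (g ⁻¹' (I i))).toReal :=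
      ENNReal.toReal_pos (hpos i).ne' (mu01_ne_top _)
    rw [← mul_assoc, ← mul_inv, Real.mul_self_sqrt hm.le]
    exact inv_mul_cancel₀ hm.ne'
  · rw [if_neg hij]
    have hdisj : g ⁻¹' (I i) ∩ g ⁻¹' (I j) = ∅ := by
      rw [← Set.preimage_inter, Set.disjoint_iff_inter_eq_empty.mp (hd hij), Set.preimage_empty]
    rw [hdisj]
    simp

lemma Lp_coeFn_sum {β : Type*} (F : β → H) (s : Finset β) :
    ⇑(∑ c ∈ s, F c) =ᵐ[mu01] fun a => ∑ c ∈ s, F c a := by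
  classical
  induction s using Finset.induction_on with
  | empty => simp only [Finset.sum_empty]; exact Lp.coeFn_zero ℝ 2 mu01
  | @insert c t hct ih =>
      rw [Finset.sum_insert hct]
      filter_upwards [Lp.coeFn_add (F c) (∑ x ∈ t, F x), ih] with a h1 h2
      rw [h1]
      show F c a + (∑ x ∈ t, F x) a = ∑ x ∈ insert c t, F x a
      rw [Finset.sum_insert hct, h2]

end Indicators

section Level
variable {g : ℝ → ℝ}

lemma levelSet_eq (u : ℝ) : levelSet g u = Ioo 0 1 ∩ g ⁻¹' {g u} := by
  ext v; simp [levelSet]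

lemma levelSet_pos (hgmono : MonotoneOn g (Ioo 0 1))
    (hgr : ∀ u ∈ Ioo (0:ℝ) 1, ContinuousWithinAt g (Ici u) u)
    (hfin : (g '' Ioo 0 1).Finite) {u : ℝ} (hu : u ∈ Ioo (0:ℝ) 1) :
    0 < volume (levelSet g u) := by
  obtain ⟨hu0, hu1⟩ := hu
  have hIoo : u ∈ Ioo (0:ℝ) 1 := ⟨hu0, hu1⟩
  have key : ∃ w, u < w ∧ Ico u w ⊆ levelSet g u := by
    set T := {t ∈ g '' Ioo 0 1 | g u < t} with hTdef
    by_cases hT : T.Nonempty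
    · have hTfin : T.Finite := hfin.subset (sep_subset _ _)
      have hmem := hT.csInf_mem hTfin
      have hgu : g u < sInf T := hmem.2
      obtain ⟨δ, hδ, hδ2⟩ := Metric.continuousWithinAt_iff.mp (hgr u hIoo) (sInf T - g u)
        (by linarith)
      refine ⟨min (u + δ) 1, lt_min (by linarith) hu1, fun v hv => ?_⟩
      have hv1 : v < 1 := lt_of_lt_of_le hv.2 (min_le_right _ _)
      have hvδ : v < u + δ := lt_of_lt_of_le hv.2 (min_le_left _ _)
      have hvIoo : v ∈ Ioo (0:ℝ) 1 := ⟨lt_of_lt_of_le hu0 hv.1, hv1⟩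
      have hge : g u ≤ g v := hgmono hIoo hvIoo hv.1
      refine ⟨hvIoo, ?_⟩
      by_contra hne
      have hlt : g u < g v := lt_of_le_of_ne hge (fun h => hne h.symm)
      have hvT : g v ∈ T := ⟨⟨v, hvIoo, rfl⟩, hlt⟩
      have hle : sInf T ≤ g v := csInf_le hTfin.bddBelow hvT
      have hdist := hδ2 (mem_Ici.mpr hv.1)
        (by rw [Real.dist_eq, abs_of_nonneg (by linarith [hv.1])]; linarith)
      rw [Real.dist_eq, abs_of_nonneg (by linarith)] at hdist
      linarith
    · refine ⟨1, hu1, fun v hv => ?_⟩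
      have hvIoo : v ∈ Ioo (0:ℝ) 1 := ⟨lt_of_lt_of_le hu0 hv.1, hv.2⟩
      have hge : g u ≤ g v := hgmono hIoo hvIoo hv.1
      refine ⟨hvIoo, ?_⟩
      by_contra hne
      exact hT ⟨g v, ⟨v, hvIoo, rfl⟩, lt_of_le_of_ne hge (fun h => hne h.symm)⟩
  obtain ⟨w, hw, hsub⟩ := key
  calc (0:ℝ≥0∞) < volume (Ico u w) := by
        rw [Real.volume_Ico]; exact ENNReal.ofReal_pos.mpr (by linarith)
    _ ≤ volume (levelSet g u) := measure_mono hsub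

lemma comap_const {f' : ℝ → ℝ}
    (hf' : StronglyMeasurable[MeasurableSpace.comap g Real.measurableSpace] f')
    {u v : ℝ} (h : g u = g v) : f' u = f' v := by
  obtain ⟨B, hB, hBeq⟩ := MeasurableSpace.measurableSet_comap.mp
    (hf'.measurable (measurableSet_singleton (f' u)))
  have hu : u ∈ f' ⁻¹' {f' u} := rfl
  rw [← hBeq] at hu
  have hv : v ∈ g ⁻¹' B := by rwa [Set.mem_preimage, ← h]
  rw [hBeq] at hv
  exact hv.symm

lemma mu01_apply (S : Set ℝ) (hS : MeasurableSet S) : mu01 S = volume (S ∩ Ioo 0 1) :=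
  Measure.restrict_apply hS

lemma preimage_singleton_pos (hgmono : MonotoneOn g (Ioo 0 1))
    (hgr : ∀ u ∈ Ioo (0:ℝ) 1, ContinuousWithinAt g (Ici u) u) (hgmeas : Measurable g)
    (hfin : (g '' Ioo 0 1).Finite) {c : ℝ} (hc : c ∈ g '' Ioo 0 1) :
    0 < mu01 (g ⁻¹' {c}) := by
  obtain ⟨u, hu, hgu⟩ := hc
  rw [mu01_apply _ (hgmeas (measurableSet_singleton _)), Set.inter_comm]
  have heq : Ioo (0:ℝ) 1 ∩ g ⁻¹' {c} = levelSet g u := by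
    rw [levelSet_eq, hgu]
  rw [heq]
  exact levelSet_pos hgmono hgr hfin hu

lemma lint_finite (hgmono : MonotoneOn g (Ioo 0 1))
    (hgr : ∀ u ∈ Ioo (0:ℝ) 1, ContinuousWithinAt g (Ici u) u)
    (hgmeas : Measurable g) (hfin : (g '' Ioo 0 1).Finite) :
    ∫⁻ u in Ioo (0:ℝ) 1, (volume (levelSet g u))⁻¹ = (hfin.toFinset.card : ℝ≥0∞) := by
  classical
  set s := hfin.toFinset with hsdef
  set L : ℝ → Set ℝ := fun c => Ioo 0 1 ∩ g ⁻¹' {c} with hLdef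
  have hLmeas : ∀ c, MeasurableSet (L c) := fun c =>
    measurableSet_Ioo.inter (hgmeas (measurableSet_singleton c))
  have hcover : Ioo (0:ℝ) 1 = ⋃ c ∈ s, L c := by
    ext u
    simp only [mem_iUnion, exists_prop]
    constructor
    · intro hu
      exact ⟨g u, hfin.mem_toFinset.mpr ⟨u, hu, rfl⟩, hu, rfl⟩
    · rintro ⟨c, _, hu, _⟩; exact hu
  have hdisj : (↑s : Set ℝ).PairwiseDisjoint L := by
    intro c _ c' _ hcc'
    refine Set.disjoint_left.mpr (fun u hu hu' => hcc' ?_)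
    rw [← hu.2, ← hu'.2]
  have hLpos : ∀ c ∈ s, 0 < volume (L c) := by
    intro c hc
    obtain ⟨u, hu, hgu⟩ := hfin.mem_toFinset.mp hc
    have h : L c = levelSet g u := by rw [levelSet_eq, hgu]
    rw [h]
    exact levelSet_pos hgmono hgr hfin hu
  have hLfin : ∀ c, volume (L c) ≠ ∞ := by
    intro c
    have h : volume (L c) ≤ volume (Ioo (0:ℝ) 1) := measure_mono Set.inter_subset_left
    rw [Real.volume_Ioo] at h
    exact (lt_of_le_of_lt h (by norm_num)).ne
  rw [hcover, lintegral_biUnion_finset hdisj (fun c _ => hLmeas c)]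
  have hterm : ∀ c ∈ s, ∫⁻ u in L c, (volume (levelSet g u))⁻¹ = 1 := by
    intro c hc
    have h1 : ∫⁻ u in L c, (volume (levelSet g u))⁻¹
        = ∫⁻ _ in L c, (volume (L c))⁻¹ := by
      refine setLIntegral_congr_fun (hLmeas c) (fun u hu => ?_)
      congr 2
      rw [levelSet_eq, hu.2]
    rw [h1, setLIntegral_const, ENNReal.inv_mul_cancel (hLpos c hc).ne' (hLfin c)]
  rw [Finset.sum_congr rfl hterm, Finset.sum_const, nsmul_eq_mul, mul_one]

lemma span_finite (hgmono : MonotoneOn g (Ioo 0 1))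
    (hgr : ∀ u ∈ Ioo (0:ℝ) 1, ContinuousWithinAt g (Ici u) u) (hgmeas : Measurable g)
    (hfin : (g '' Ioo (0:ℝ) 1).Finite) :
    Lg g ≤ Submodule.span ℝ (Set.range (fun c : ↥(g '' Ioo (0:ℝ) 1) =>
      normInd g hgmeas {(c : ℝ)} (measurableSet_singleton _))) := by
  classical
  haveI : Fintype ↥(g '' Ioo (0:ℝ) 1) := hfin.fintype
  intro x hx
  obtain ⟨f', hf'sm, hx'⟩ := mem_lpMeas_iff_aestronglyMeasurable.mp hx
  have hchoice : ∀ c : ↥(g '' Ioo (0:ℝ) 1), ∃ u, u ∈ Ioo (0:ℝ) 1 ∧ g u = (c:ℝ) := fun c => c.2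
  choose pt hpt1 hpt2 using hchoice
  have hxeq : x = ∑ c : ↥(g '' Ioo (0:ℝ) 1), f' (pt c) •
      indL2 (g ⁻¹' {(c:ℝ)}) (hgmeas (measurableSet_singleton _)) := by
    apply Lp.ext
    have hsum := Lp_coeFn_sum (fun c : ↥(g '' Ioo (0:ℝ) 1) => f' (pt c) •
      indL2 (g ⁻¹' {(c:ℝ)}) (hgmeas (measurableSet_singleton _))) Finset.univ
    have hsmul : ∀ᵐ a ∂mu01, ∀ c : ↥(g '' Ioo (0:ℝ) 1),
        (f' (pt c) • indL2 (g ⁻¹' {(c:ℝ)}) (hgmeas (measurableSet_singleton _))) a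
          = f' (pt c) * (g ⁻¹' {(c:ℝ)}).indicator (fun _ => (1:ℝ)) a := by
      rw [ae_all_iff]
      intro c
      filter_upwards [Lp.coeFn_smul (f' (pt c))
        (indL2 (g ⁻¹' {(c:ℝ)}) (hgmeas (measurableSet_singleton _))),
        indL2_coeFn (g ⁻¹' {(c:ℝ)}) (hgmeas (measurableSet_singleton _))] with a h1 h2
      rw [h1]
      simp only [Pi.smul_apply, smul_eq_mul]
      rw [h2]
    filter_upwards [hx', hsum, hsmul, ae_restrict_mem measurableSet_Ioo] with a ha hsa hsm haIoo
    rw [ha, hsa]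
    rw [Finset.sum_congr rfl (fun c (_ : c ∈ Finset.univ) => hsm c)]
    have hga : g a ∈ g '' Ioo (0:ℝ) 1 := ⟨a, haIoo, rfl⟩
    rw [Finset.sum_eq_single (⟨g a, hga⟩ : ↥(g '' Ioo (0:ℝ) 1)) ?_ ?_]
    · have hmem : a ∈ g ⁻¹' {((⟨g a, hga⟩ : ↥(g '' Ioo (0:ℝ) 1)) : ℝ)} := rfl
      rw [Set.indicator_of_mem hmem, mul_one]
      exact (comap_const hf'sm (hpt2 ⟨g a, hga⟩)).symm
    · intro c _ hne
      have hnm : a ∉ g ⁻¹' {(c:ℝ)} := by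
        intro hmem
        exact hne (Subtype.ext hmem.symm)
      rw [Set.indicator_of_notMem hnm, mul_zero]
    · intro habs
      exact absurd (Finset.mem_univ _) habs
  rw [hxeq]
  apply Submodule.sum_mem
  intro c _
  apply Submodule.smul_mem
  have hpos : 0 < mu01 (g ⁻¹' {(c:ℝ)}) :=
    preimage_singleton_pos hgmono hgr hgmeas hfin c.2
  have hsq : Real.sqrt ((mu01 (g ⁻¹' {(c:ℝ)})).toReal) ≠ 0 :=
    Real.sqrt_ne_zero'.mpr (ENNReal.toReal_pos hpos.ne' (mu01_ne_top _))
  have hrw : indL2 (g ⁻¹' {(c:ℝ)}) (hgmeas (measurableSet_singleton _))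
      = Real.sqrt ((mu01 (g ⁻¹' {(c:ℝ)})).toReal) •
        normInd g hgmeas {(c:ℝ)} (measurableSet_singleton _) := by
    rw [normInd, smul_smul, mul_inv_cancel₀ hsq, one_smul]
  rw [hrw]
  exact Submodule.smul_mem _ _ (Submodule.subset_span ⟨c, rfl⟩)

end Level
section Infinite
variable {g : ℝ → ℝ}

lemma exists_strictmono_seq {T : Set ℝ} (hinf : T.Infinite) :
    ∃ c : ℕ → ℝ, (∀ n, c n ∈ T) ∧ (StrictMono c ∨ StrictAnti c) := by
  by_cases hwf : T.IsWF
  · set e : ℕ ↪ T := Set.Infinite.natEmbedding T hinf with hedef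
    set f : ℕ → ℝ := fun n => (e n : ℝ) with hfdef
    have hfmem : ∀ n, f n ∈ T := fun n => (e n).2
    have hfinj : Function.Injective f :=
      fun m n h => e.injective (Subtype.ext h)
    obtain ⟨φ, hφ⟩ := hwf.isPWO.exists_monotone_subseq hfmem
    exact ⟨f ∘ φ, fun n => hfmem _,
      Or.inl (hφ.strictMono_of_injective (hfinj.comp φ.injective))⟩
  · rw [Set.isWF_iff_no_descending_seq] at hwf
    push_neg at hwf
    obtain ⟨f, hf, hmem⟩ := hwf
    exact ⟨f, fun n => hmem n, Or.inr hf⟩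

lemma exists_disjoint_preimages (hgmono : MonotoneOn g (Ioo 0 1)) (hgmeas : Measurable g)
    (hinf : (g '' Ioo (0:ℝ) 1).Infinite) :
    ∃ I : ℕ → Set ℝ, (∀ n, MeasurableSet (I n)) ∧ Pairwise (Function.onFun Disjoint I) ∧
      ∀ n, 0 < mu01 (g ⁻¹' I n) := by
  obtain ⟨c, hcmem, hmono⟩ := exists_strictmono_seq hinf
  choose u hu hgu using fun n => hcmem n
  rcases hmono with hinc | hdec
  · have huinc : StrictMono u := by
      intro m n hmn
      by_contra hle
      push_neg at hle
      have h := hgmono (hu n) (hu m) hle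
      rw [hgu, hgu] at h
      exact absurd h (not_le.mpr (hinc hmn))
    refine ⟨fun n => Ioc (c (2*n)) (c (2*n+2)), fun n => measurableSet_Ioc, ?_, ?_⟩
    · have key : ∀ {m n : ℕ}, m < n →
          Disjoint (Ioc (c (2*m)) (c (2*m+2))) (Ioc (c (2*n)) (c (2*n+2))) := by
        intro m n h
        refine Set.disjoint_left.mpr (fun x hx hx' => ?_)
        have h1 : c (2*m+2) ≤ c (2*n) := hinc.monotone (by omega)
        have h2 := hx.2
        have h3 := hx'.1
        linarith
      intro m n hmn
      rcases hmn.lt_or_gt with h | h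
      exacts [key h, (key h).symm]
    · intro n
      rw [mu01_apply _ (hgmeas measurableSet_Ioc)]
      have hsub : Ioc (u (2*n+1)) (u (2*n+2)) ⊆ g ⁻¹' Ioc (c (2*n)) (c (2*n+2)) ∩ Ioo 0 1 := by
        intro v hv
        have hvIoo : v ∈ Ioo (0:ℝ) 1 :=
          ⟨lt_trans (hu (2*n+1)).1 hv.1, lt_of_le_of_lt hv.2 (hu (2*n+2)).2⟩
        refine ⟨⟨?_, ?_⟩, hvIoo⟩
        · have h1 : g (u (2*n+1)) ≤ g v := hgmono (hu _) hvIoo hv.1.le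
          rw [hgu] at h1
          have h2 : c (2*n) < c (2*n+1) := hinc (by omega)
          linarith
        · have h1 : g v ≤ g (u (2*n+2)) := hgmono hvIoo (hu _) hv.2
          rwa [hgu] at h1
      calc (0:ℝ≥0∞) < volume (Ioc (u (2*n+1)) (u (2*n+2))) := by
            rw [Real.volume_Ioc]
            exact ENNReal.ofReal_pos.mpr (by linarith [huinc (show 2*n+1 < 2*n+2 by omega)])
        _ ≤ _ := measure_mono hsub
  · have hudec : StrictAnti u := by
      intro m n hmn
      by_contra hle
      push_neg at hle
      have h := hgmono (hu m) (hu n) hle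
      rw [hgu, hgu] at h
      exact absurd h (not_le.mpr (hdec hmn))
    refine ⟨fun n => Ioc (c (2*n+2)) (c (2*n)), fun n => measurableSet_Ioc, ?_, ?_⟩
    · have key : ∀ {m n : ℕ}, m < n →
          Disjoint (Ioc (c (2*m+2)) (c (2*m))) (Ioc (c (2*n+2)) (c (2*n))) := by
        intro m n h
        refine Set.disjoint_left.mpr (fun x hx hx' => ?_)
        have h1 : c (2*n) ≤ c (2*m+2) := hdec.antitone (by omega)
        have h2 := hx.1
        have h3 := hx'.2
        linarith
      intro m n hmn
      rcases hmn.lt_or_gt with h | h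
      exacts [key h, (key h).symm]
    · intro n
      rw [mu01_apply _ (hgmeas measurableSet_Ioc)]
      have hsub : Ico (u (2*n+1)) (u (2*n)) ⊆ g ⁻¹' Ioc (c (2*n+2)) (c (2*n)) ∩ Ioo 0 1 := by
        intro v hv
        have hvIoo : v ∈ Ioo (0:ℝ) 1 :=
          ⟨lt_of_lt_of_le (hu (2*n+1)).1 hv.1, lt_trans hv.2 (hu (2*n)).2⟩
        refine ⟨⟨?_, ?_⟩, hvIoo⟩
        · have h1 : g (u (2*n+1)) ≤ g v := hgmono (hu _) hvIoo hv.1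
          rw [hgu] at h1
          have h2 : c (2*n+2) < c (2*n+1) := hdec (by omega)
          linarith
        · have h1 : g v ≤ g (u (2*n)) := hgmono hvIoo (hu _) hv.2.le
          rwa [hgu] at h1
      calc (0:ℝ≥0∞) < volume (Ico (u (2*n+1)) (u (2*n))) := by
            rw [Real.volume_Ico]
            exact ENNReal.ofReal_pos.mpr (by linarith [hudec (show 2*n < 2*n+1 by omega)])
        _ ≤ _ := measure_mono hsub

lemma lint_infinite (hgmeas : Measurable g) (I : ℕ → Set ℝ)
    (hImeas : ∀ n, MeasurableSet (I n)) (hd : Pairwise (Function.onFun Disjoint I))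
    (hpos : ∀ n, 0 < mu01 (g ⁻¹' I n)) :
    ∫⁻ u in Ioo (0:ℝ) 1, (volume (levelSet g u))⁻¹ = ∞ := by
  set B : ℕ → Set ℝ := fun n => g ⁻¹' I n ∩ Ioo 0 1 with hBdef
  have hBmeas : ∀ n, MeasurableSet (B n) := fun n =>
    (hgmeas (hImeas n)).inter measurableSet_Ioo
  have hBdisj : Pairwise (Function.onFun Disjoint B) := fun m n hmn =>
    (((hd hmn).preimage g).mono Set.inter_subset_left Set.inter_subset_left)
  have hBsub : (⋃ n, B n) ⊆ Ioo 0 1 := iUnion_subset fun n => Set.inter_subset_right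
  have hvol : ∀ n, volume (B n) = mu01 (g ⁻¹' I n) := fun n =>
    (mu01_apply _ (hgmeas (hImeas n))).symm
  have hBfin : ∀ n, volume (B n) ≠ ∞ := fun n => by
    rw [hvol n]; exact mu01_ne_top _
  have hBpos : ∀ n, 0 < volume (B n) := fun n => by rw [hvol n]; exact hpos n
  refine eq_top_iff.mpr ?_
  calc (⊤:ℝ≥0∞) = ∑' _ : ℕ, (1:ℝ≥0∞) :=
        (ENNReal.tsum_const_eq_top_of_ne_zero one_ne_zero).symm
    _ ≤ ∑' n, ∫⁻ u in B n, (volume (levelSet g u))⁻¹ := by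
        refine Summable.tsum_le_tsum (fun n => ?_) ENNReal.summable ENNReal.summable
        have hlb : ∀ u ∈ B n, (volume (B n))⁻¹ ≤ (volume (levelSet g u))⁻¹ := by
          intro u hu
          refine ENNReal.inv_le_inv' (measure_mono ?_)
          intro v hv
          exact ⟨show g v ∈ I n by rw [hv.2]; exact hu.1, hv.1⟩
        calc (1:ℝ≥0∞) = (volume (B n))⁻¹ * volume (B n) :=
              (ENNReal.inv_mul_cancel (hBpos n).ne' (hBfin n)).symm
          _ = ∫⁻ _ in B n, (volume (B n))⁻¹ := (setLIntegral_const _ _).symm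
          _ ≤ ∫⁻ u in B n, (volume (levelSet g u))⁻¹ :=
              setLIntegral_mono' (hBmeas n) hlb
    _ = ∫⁻ u in ⋃ n, B n, (volume (levelSet g u))⁻¹ :=
        (lintegral_iUnion hBmeas hBdisj _).symm
    _ ≤ ∫⁻ u in Ioo (0:ℝ) 1, (volume (levelSet g u))⁻¹ := lintegral_mono_set hBsub

end Infinite

/-- for `g ∈ L₂↑` with nondecreasing càdlàg modification (here `g` itself
is taken nondecreasing, càdlàg and measurable) and `m_g(u) = leb{v : g u = g v}`, the
squared Hilbert–Schmidt norm of `pr_g` (computed in any Hilbert basis) equals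
`∫₀¹ du / m_g(u)` (with `1/0 = ∞`) and equals the number `#g` of distinct values of `g`
on `(0,1)`; in particular it is finite iff `g` takes finitely many values on `(0,1)`. -/
theorem stmt3 (g : ℝ → ℝ) (hgmono : MonotoneOn g (Set.Ioo (0:ℝ) 1))
    (hgr : ∀ u ∈ Set.Ioo (0:ℝ) 1, ContinuousWithinAt g (Set.Ici u) u)
    (hgmeas : Measurable g) (hg2 : MemLp g 2 mu01)
    {ι : Type} (b : HilbertBasis ι ℝ H) :
    (∑' i : ι, (‖projOp g hgmeas (b i)‖₊ : ℝ≥0∞) ^ 2)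
        = ∫⁻ u in Set.Ioo (0:ℝ) 1, (volume (levelSet g u))⁻¹ ∧
      (∑' i : ι, (‖projOp g hgmeas (b i)‖₊ : ℝ≥0∞) ^ 2)
        = ((g '' Set.Ioo (0:ℝ) 1).encard : ℝ≥0∞) ∧
      ((∑' i : ι, (‖projOp g hgmeas (b i)‖₊ : ℝ≥0∞) ^ 2) < ∞ ↔
        (g '' Set.Ioo (0:ℝ) 1).Finite) := by
  
  haveI : Fact (MeasurableSpace.comap g Real.measurableSpace ≤ Real.measurableSpace) :=
    ⟨hgmeas.comap_le⟩
  have hLHS : (∑' i : ι, (‖projOp g hgmeas (b i)‖₊ : ℝ≥0∞) ^ 2)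
      = ∑' i, ENNReal.ofReal (‖(((Lg g).orthogonalProjectionOnto (b i) : Lg g) : H)‖^2) := by
    refine tsum_congr fun i => ?_
    have h : projOp g hgmeas (b i) = (((Lg g).orthogonalProjectionOnto (b i) : Lg g) : H) := rfl
    rw [h, enn_norm_sq]
  by_cases hfin : (g '' Set.Ioo (0:ℝ) 1).Finite
  · have honf : Orthonormal ℝ (fun c : ↥(g '' Ioo (0:ℝ) 1) =>
        normInd g hgmeas {(c : ℝ)} (measurableSet_singleton _)) :=
      normInd_orthonormal hgmeas _ (fun c => measurableSet_singleton _)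
        (fun i j hij => Set.disjoint_singleton.mpr (fun h => hij (Subtype.ext h)))
        (fun c => preimage_singleton_pos hgmono hgr hgmeas hfin c.2)
    have hmem : ∀ c : ↥(g '' Ioo (0:ℝ) 1),
        normInd g hgmeas {(c : ℝ)} (measurableSet_singleton _) ∈ Lg g :=
      fun c => normInd_mem_Lg hgmeas _ _
    have hHS : (∑' i : ι, (‖projOp g hgmeas (b i)‖₊ : ℝ≥0∞) ^ 2)
        = ((g '' Set.Ioo (0:ℝ) 1).encard : ℝ≥0∞) := by
      rw [hLHS, hs_eq b honf hmem (span_finite hgmono hgr hgmeas hfin),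
        ENNReal.tsum_set_one]
    have hcardeq : ((g '' Set.Ioo (0:ℝ) 1).encard : ℝ≥0∞) = (hfin.toFinset.card : ℝ≥0∞) := by
      rw [hfin.encard_eq_coe_toFinset_card, ENat.toENNReal_coe]
    refine ⟨?_, hHS, ?_⟩
    · rw [hHS, hcardeq, lint_finite hgmono hgr hgmeas hfin]
    · rw [hHS, hcardeq]
      simp [hfin]
  · have hinf : (g '' Set.Ioo (0:ℝ) 1).Infinite := hfin
    obtain ⟨I, hImeas, hd, hpos⟩ := exists_disjoint_preimages hgmono hgmeas hinf
    have honf : Orthonormal ℝ (fun n : ℕ => normInd g hgmeas (I n) (hImeas n)) :=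
      normInd_orthonormal hgmeas I hImeas hd hpos
    have hHS : (∑' i : ι, (‖projOp g hgmeas (b i)‖₊ : ℝ≥0∞) ^ 2) = ⊤ := by
      rw [hLHS]
      by_contra hne
      obtain ⟨n, hn⟩ := ENNReal.exists_nat_gt hne
      have hge := hs_ge b honf (fun n => normInd_mem_Lg hgmeas _ _) (Finset.range n)
      rw [Finset.card_range] at hge
      exact absurd (lt_of_le_of_lt hge hn) (lt_irrefl _)
    refine ⟨?_, ?_, ?_⟩
    · rw [hHS, lint_infinite hgmeas I hImeas hd hpos]
    · rw [hHS, Set.encard_eq_top hinf, ENat.toENNReal_top]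
    · rw [hHS]
      simp [hfin]
end
end

section
/- Let [a,b] ⊂ ℝ, let E be a Polish space, and let U = {a = u₀ < u₁ < ... < u_l = b} be a partition. Suppose (Xₙ) is a sequence of random elements of D([a,b], E) (càdlàg paths continuous at b), and that for each i the restricted processes Xₙ^{[u_{i-1},u_i]} (defined by Xₙ on [u_{i-1}, u_i) and by the left limit Xₙ(u_i−) at u_i) are tight in D([u_{i-1}, u_i], E). Then (Xₙ) is tight in D([a,b], E). -/
open MeasureTheory Set Filter Topology
open scoped ENNReal

noncomputable section

variable {E : Type*} [MetricSpace E]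

/-- Admissible time changes of `[a,b]`: strictly increasing bijections of `[a,b]`
fixing the endpoints. -/
def TimeChanges (a b : ℝ) : Set (ℝ → ℝ) :=
  {lam | StrictMonoOn lam (Set.Icc a b) ∧ lam '' Set.Icc a b = Set.Icc a b ∧
    lam a = a ∧ lam b = b}

/-- The quantity `γ(λ) = sup_{v<u} |log((λ(u)−λ(v))/(u−v))|` (valued in `ℝ≥0∞`). -/
def gammaTC (a b : ℝ) (lam : ℝ → ℝ) : ℝ≥0∞ :=
  ⨆ (u : ℝ) (_ : u ∈ Set.Icc a b) (v : ℝ) (_ : v ∈ Set.Icc a b) (_ : v < u),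
    ENNReal.ofReal |Real.log ((lam u - lam v) / (u - v))|

/-- The Skorohod distance on `D([a,b], E)`:
`d(f,g) = inf_λ max(γ(λ), sup_u dist(f(λ(u)), g(u)))`. -/
def skDist (a b : ℝ) (f g : ℝ → E) : ℝ≥0∞ :=
  ⨅ (lam : ℝ → ℝ) (_ : lam ∈ TimeChanges a b),
    max (gammaTC a b lam) (⨆ (u : ℝ) (_ : u ∈ Set.Icc a b), edist (f (lam u)) (g u))

/-- `f` is càdlàg on `[a,b]` and continuous at `b` (membership in `D([a,b], E)`). -/
def Cadlag (a b : ℝ) (f : ℝ → E) : Prop :=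
  (∀ u ∈ Set.Ico a b, Tendsto f (nhdsWithin u (Set.Ioc u b)) (nhds (f u))) ∧
  (∀ u ∈ Set.Ioc a b, ∃ l : E, Tendsto f (nhdsWithin u (Set.Ico a u)) (nhds l)) ∧
  Tendsto f (nhdsWithin b (Set.Icc a b)) (nhds (f b))

/-- Compactness (sequential, for the Skorohod metric) of a set `K ⊆ D([a,b], E)`. -/
def SkCompact (a b : ℝ) (K : Set (ℝ → E)) : Prop :=
  (∀ f ∈ K, Cadlag a b f) ∧
  ∀ x : ℕ → ℝ → E, (∀ n, x n ∈ K) →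
    ∃ f ∈ K, ∃ φ : ℕ → ℕ, StrictMono φ ∧
      Tendsto (fun n => skDist a b (x (φ n)) f) atTop (nhds 0)

/-- `g` is the restriction `f^{[c,d]}` of `f`: it agrees with `f` on `[c,d)` and takes
the left limit `f(d−)` at `d`. -/
def IsRestriction (c d : ℝ) (f g : ℝ → E) : Prop :=
  (∀ u ∈ Set.Ico c d, g u = f u) ∧ Tendsto f (nhdsWithin d (Set.Ico c d)) (nhds (g d))



namespace Stmt15Aux

lemma part_mono {l : ℕ} {u : ℕ → ℝ} (h : ∀ i < l, u i < u (i + 1)) :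
    ∀ {i j : ℕ}, i ≤ j → j ≤ l → u i ≤ u j := by
  intro i j hij hjl
  induction j with
  | zero => simp_all
  | succ m ih =>
    rcases Nat.le_succ_iff.mp hij with h' | h'
    · exact le_trans (ih h' (by omega)) (le_of_lt (h m (by omega)))
    · exact le_of_eq (congrArg u h')

lemma part_find {l : ℕ} {u : ℕ → ℝ} (h : ∀ i < l, u i < u (i + 1)) {t : ℝ}
    (h1 : u 0 ≤ t) (h2 : t < u l) : ∃ i, i < l ∧ u i ≤ t ∧ t < u (i + 1) := by
  induction l with
  | zero => exact absurd (lt_of_le_of_lt h1 h2) (lt_irrefl _)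
  | succ m ih =>
    by_cases hc : t < u m
    · obtain ⟨i, hi, h3, h4⟩ := ih (fun i hi => h i (by omega)) hc
      exact ⟨i, by omega, h3, h4⟩
    · exact ⟨m, by omega, le_of_not_gt hc, h2⟩

lemma part_find_left {l : ℕ} {u : ℕ → ℝ} (h : ∀ i < l, u i < u (i + 1)) {t : ℝ}
    (h1 : u 0 < t) (h2 : t ≤ u l) : ∃ i, i < l ∧ u i < t ∧ t ≤ u (i + 1) := by
  induction l with
  | zero => exact absurd (lt_of_lt_of_le h1 h2) (lt_irrefl _)
  | succ m ih =>
    by_cases hc : t ≤ u m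
    · obtain ⟨i, hi, h3, h4⟩ := ih (fun i hi => h i (by omega)) hc
      exact ⟨i, by omega, h3, h4⟩
    · exact ⟨m, by omega, lt_of_not_ge hc, h2⟩

lemma part_unique {l : ℕ} {u : ℕ → ℝ} (h : ∀ i < l, u i < u (i + 1)) {t : ℝ}
    {i j : ℕ} (hi : i < l ∧ u i ≤ t ∧ t < u (i + 1)) (hj : j < l ∧ u j ≤ t ∧ t < u (j + 1)) :
    i = j := by
  by_contra hne
  rcases Nat.lt_or_ge i j with hij | hij
  · have : u (i+1) ≤ u j := part_mono h (by omega) (by omega)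
    linarith [hi.2.2, hj.2.1]
  · have hji : j < i := by omega
    have : u (j+1) ≤ u i := part_mono h (by omega) (by omega)
    linarith [hi.2.1, hj.2.2]

lemma part_cover {l : ℕ} {u : ℕ → ℝ} (hl : 0 < l) (h : ∀ i < l, u i < u (i + 1)) :
    Set.Icc (u 0) (u l) = ⋃ i ∈ Finset.range l, Set.Icc (u i) (u (i + 1)) := by
  induction l with
  | zero => omega
  | succ m ih =>
    by_cases hm : m = 0
    · subst hm; simp
    · have hm' : 0 < m := by omega
      have ihm := ih hm' (fun i hi => h i (by omega))
      have : Set.Icc (u 0) (u (m+1)) = Set.Icc (u 0) (u m) ∪ Set.Icc (u m) (u (m+1)) := by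
        rw [Set.Icc_union_Icc_eq_Icc (part_mono h (Nat.zero_le m) (by omega))
          (le_of_lt (h m (by omega)))]
      rw [this, ihm]
      ext t
      simp only [Set.mem_union, Set.mem_iUnion, Finset.mem_range]
      constructor
      · rintro (⟨i, hi, ht⟩ | ht)
        · exact ⟨i, by omega, ht⟩
        · exact ⟨m, by omega, ht⟩
      · rintro ⟨i, hi, ht⟩
        rcases Nat.lt_or_ge i m with h' | h'
        · exact Or.inl ⟨i, h', ht⟩
        · have : i = m := by omega
          subst this; exact Or.inr ht

lemma gamma_term_le {a b c : ℝ} {lam : ℝ → ℝ} (h : gammaTC a b lam ≤ ENNReal.ofReal c)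
    (hc : 0 ≤ c) {v w : ℝ} (hw : w ∈ Set.Icc a b) (hv : v ∈ Set.Icc a b) (hvw : v < w) :
    |Real.log ((lam w - lam v) / (w - v))| ≤ c := by
  have h1 : ENNReal.ofReal |Real.log ((lam w - lam v) / (w - v))| ≤ gammaTC a b lam := by
    unfold gammaTC
    exact le_iSup₂_of_le w hw (le_iSup₂_of_le v hv (le_iSup_of_le hvw le_rfl))
  have h2 := le_trans h1 h
  exact (ENNReal.ofReal_le_ofReal_iff hc).mp h2

lemma slope_of_gamma {a b c : ℝ} {lam : ℝ → ℝ} (h : gammaTC a b lam ≤ ENNReal.ofReal c)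
    (hc : 0 ≤ c) {v w : ℝ} (hw : w ∈ Set.Icc a b) (hv : v ∈ Set.Icc a b) (hvw : v < w)
    (hpos : 0 < lam w - lam v) :
    Real.exp (-c) * (w - v) ≤ lam w - lam v ∧ lam w - lam v ≤ Real.exp c * (w - v) := by
  set s := (lam w - lam v) / (w - v) with hs
  have hwv : 0 < w - v := by linarith
  have hspos : 0 < s := div_pos hpos hwv
  have habs := gamma_term_le h hc hw hv hvw
  have h1 : s ≤ Real.exp c := by
    have := (abs_le.mp habs).2
    calc s = Real.exp (Real.log s) := (Real.exp_log hspos).symm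
    _ ≤ Real.exp c := Real.exp_le_exp.mpr this
  have h2 : Real.exp (-c) ≤ s := by
    have := (abs_le.mp habs).1
    calc Real.exp (-c) ≤ Real.exp (Real.log s) := Real.exp_le_exp.mpr this
    _ = s := Real.exp_log hspos
  constructor
  · calc Real.exp (-c) * (w - v) ≤ s * (w - v) := by nlinarith
    _ = lam w - lam v := by rw [hs, div_mul_cancel₀ _ hwv.ne']
  · calc lam w - lam v = s * (w - v) := by rw [hs, div_mul_cancel₀ _ hwv.ne']
    _ ≤ Real.exp c * (w - v) := by nlinarith

lemma gamma_of_slope {a b c : ℝ} {lam : ℝ → ℝ} (hc : 0 ≤ c)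
    (h : ∀ v w, v ∈ Set.Icc a b → w ∈ Set.Icc a b → v < w →
      Real.exp (-c) * (w - v) ≤ lam w - lam v ∧ lam w - lam v ≤ Real.exp c * (w - v)) :
    gammaTC a b lam ≤ ENNReal.ofReal c := by
  unfold gammaTC
  refine iSup₂_le fun w hw => iSup₂_le fun v hv => iSup_le fun hvw => ?_
  obtain ⟨h1, h2⟩ := h v w hv hw hvw
  have hwv : 0 < w - v := by linarith
  set s := (lam w - lam v) / (w - v) with hs
  have hs1 : Real.exp (-c) ≤ s := (le_div_iff₀ hwv).mpr h1
  have hs2 : s ≤ Real.exp c := (div_le_iff₀ hwv).mpr h2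
  have hspos : 0 < s := lt_of_lt_of_le (Real.exp_pos _) hs1
  refine ENNReal.ofReal_le_ofReal (abs_le.mpr ⟨?_, ?_⟩)
  · calc -c = Real.log (Real.exp (-c)) := (Real.log_exp _).symm
    _ ≤ Real.log s := Real.log_le_log (Real.exp_pos _) hs1
  · calc Real.log s ≤ Real.log (Real.exp c) := Real.log_le_log hspos hs2
    _ = c := Real.log_exp _

/-- glue a family of functions along a partition, with a default. -/
def glueFun {α : Type*} (l : ℕ) (u : ℕ → ℝ) (g : ℕ → ℝ → α) (dflt : ℝ → α) : ℝ → α :=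
  fun t => if h : ∃ i, i < l ∧ u i ≤ t ∧ t < u (i + 1) then g h.choose t else dflt t

lemma glueFun_eq {α : Type*} {l : ℕ} {u : ℕ → ℝ} (h : ∀ i < l, u i < u (i + 1))
    (g : ℕ → ℝ → α) (dflt : ℝ → α) {i : ℕ} {t : ℝ}
    (hi : i < l) (ht : u i ≤ t) (ht2 : t < u (i + 1)) :
    glueFun l u g dflt t = g i t := by
  have hex : ∃ j, j < l ∧ u j ≤ t ∧ t < u (j + 1) := ⟨i, hi, ht, ht2⟩
  rw [glueFun, dif_pos hex]
  congr 1
  exact part_unique h hex.choose_spec ⟨hi, ht, ht2⟩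

lemma glueFun_of_ge {α : Type*} {l : ℕ} {u : ℕ → ℝ} (h : ∀ i < l, u i < u (i + 1))
    (g : ℕ → ℝ → α) (dflt : ℝ → α) {t : ℝ} (ht : u l ≤ t) :
    glueFun l u g dflt t = dflt t := by
  rw [glueFun, dif_neg]
  rintro ⟨i, hi, h1, h2⟩
  have : u (i+1) ≤ u l := part_mono h (by omega) le_rfl
  linarith

section GlueL

variable {l : ℕ} {u : ℕ → ℝ} {lams : ℕ → ℝ → ℝ} {c : ℝ}

/-- the glued time change -/
def glueL (l : ℕ) (u : ℕ → ℝ) (lams : ℕ → ℝ → ℝ) : ℝ → ℝ := glueFun l u lams id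

lemma glueL_eq (hmono : ∀ i < l, u i < u (i + 1))
    (hlam : ∀ i < l, lams i ∈ TimeChanges (u i) (u (i + 1))) {i : ℕ} (hi : i < l)
    {t : ℝ} (ht : t ∈ Set.Icc (u i) (u (i + 1))) : glueL l u lams t = lams i t := by
  rcases lt_or_eq_of_le ht.2 with h2 | h2
  · exact glueFun_eq hmono lams id hi ht.1 h2
  · subst h2
    by_cases hil : i + 1 < l
    · rw [glueL, glueFun_eq hmono lams id hil le_rfl (hmono _ hil)]
      rw [(hlam (i+1) hil).2.2.1, (hlam i hi).2.2.2]
    · have hil' : i + 1 = l := by omega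
      rw [glueL, glueFun_of_ge hmono lams id (hil' ▸ le_rfl)]
      rw [(hlam i hi).2.2.2]
      rfl

lemma glueL_slope (hl : 0 < l) (hmono : ∀ i < l, u i < u (i + 1))
    (hlam : ∀ i < l, lams i ∈ TimeChanges (u i) (u (i + 1))) (hc : 0 ≤ c)
    (hγ : ∀ i < l, gammaTC (u i) (u (i + 1)) (lams i) ≤ ENNReal.ofReal c) :
    ∀ m ≤ l, ∀ v w, u 0 ≤ v → v ≤ w → w ≤ u m →
      Real.exp (-c) * (w - v) ≤ glueL l u lams w - glueL l u lams v ∧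
      glueL l u lams w - glueL l u lams v ≤ Real.exp c * (w - v) := by
  have piece : ∀ i < l, ∀ v w, v ∈ Set.Icc (u i) (u (i+1)) → w ∈ Set.Icc (u i) (u (i+1)) →
      v ≤ w → Real.exp (-c) * (w - v) ≤ lams i w - lams i v ∧
        lams i w - lams i v ≤ Real.exp c * (w - v) := by
    intro i hi v w hv hw hvw
    rcases eq_or_lt_of_le hvw with h | h
    · subst h; simp
    · have hpos : 0 < lams i w - lams i v := sub_pos.mpr ((hlam i hi).1 hv hw h)
      exact slope_of_gamma (hγ i hi) hc hw hv h hpos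
  intro m hm
  induction m with
  | zero =>
    intro v w h1 h2 h3
    have : v = w := le_antisymm h2 (by linarith)
    subst this; simp
  | succ m ih =>
    intro v w h1 h2 h3
    have hml : m < l := by omega
    by_cases hw : w ≤ u m
    · exact ih (by omega) v w h1 h2 hw
    · push_neg at hw
      have humle : u 0 ≤ u m := part_mono hmono (Nat.zero_le m) (by omega)
      by_cases hv : u m ≤ v
      · have e1 : glueL l u lams v = lams m v := glueL_eq hmono hlam hml ⟨hv, by linarith⟩
        have e2 : glueL l u lams w = lams m w := glueL_eq hmono hlam hml ⟨le_of_lt hw, h3⟩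
        rw [e1, e2]
        exact piece m hml v w ⟨hv, by linarith⟩ ⟨le_of_lt hw, h3⟩ h2
      · push_neg at hv
        have hum : glueL l u lams (u m) = lams m (u m) :=
          glueL_eq hmono hlam hml ⟨le_rfl, le_of_lt (hmono m hml)⟩
        have e2 : glueL l u lams w = lams m w := glueL_eq hmono hlam hml ⟨le_of_lt hw, h3⟩
        obtain ⟨p1, p2⟩ := piece m hml (u m) w ⟨le_rfl, le_of_lt (hmono m hml)⟩
          ⟨le_of_lt hw, h3⟩ (le_of_lt hw)
        obtain ⟨q1, q2⟩ := ih (by omega) v (u m) h1 (le_of_lt hv) le_rfl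
        rw [hum] at q1 q2
        constructor
        · have : Real.exp (-c) * (w - v)
              = Real.exp (-c) * (w - u m) + Real.exp (-c) * (u m - v) := by ring
          rw [this, e2]; linarith
        · have : Real.exp c * (w - v)
              = Real.exp c * (w - u m) + Real.exp c * (u m - v) := by ring
          rw [this, e2]; linarith

lemma glueL_mem (hl : 0 < l) (hmono : ∀ i < l, u i < u (i + 1))
    (hlam : ∀ i < l, lams i ∈ TimeChanges (u i) (u (i + 1))) (hc : 0 ≤ c)
    (hγ : ∀ i < l, gammaTC (u i) (u (i + 1)) (lams i) ≤ ENNReal.ofReal c) :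
    glueL l u lams ∈ TimeChanges (u 0) (u l) ∧
    gammaTC (u 0) (u l) (glueL l u lams) ≤ ENNReal.ofReal c := by
  have slope := glueL_slope hl hmono hlam hc hγ l le_rfl
  have hsm : StrictMonoOn (glueL l u lams) (Set.Icc (u 0) (u l)) := by
    intro v hv w hw hvw
    have := (slope v w hv.1 (le_of_lt hvw) hw.2).1
    have hwv : 0 < w - v := sub_pos.mpr hvw
    have he : 0 < Real.exp (-c) * (w - v) := by positivity
    linarith
  have himg : glueL l u lams '' Set.Icc (u 0) (u l) = Set.Icc (u 0) (u l) := by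
    rw [part_cover hl hmono, Set.image_iUnion₂]
    refine Set.iUnion₂_congr fun i hi => ?_
    have hi' := Finset.mem_range.mp hi
    rw [Set.image_congr (fun x hx => glueL_eq hmono hlam hi' hx), (hlam i hi').2.1]
  refine ⟨⟨hsm, himg, ?_, ?_⟩, gamma_of_slope hc fun v w hv hw hvw =>
    slope v w hv.1 (le_of_lt hvw) hw.2⟩
  · rw [glueL_eq hmono hlam hl ⟨le_rfl, le_of_lt (hmono 0 hl)⟩, (hlam 0 hl).2.2.1]
  · rw [glueL, glueFun_of_ge hmono lams id le_rfl]; rfl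

end GlueL

/-- value of a restriction at the right endpoint when `f` is left-continuous there. -/
lemma restr_right_val {E : Type*} [MetricSpace E] {c d : ℝ} (hcd : c < d) {f g : ℝ → E}
    (hf : Tendsto f (nhdsWithin d (Set.Ico c d)) (nhds (f d)))
    (hr : IsRestriction c d f g) : g d = f d := by
  have hne : (nhdsWithin d (Set.Ico c d)).NeBot := by
    rw [← mem_closure_iff_nhdsWithin_neBot, closure_Ico hcd.ne]
    exact ⟨le_of_lt hcd, le_rfl⟩
  exact tendsto_nhds_unique hr.2 hf

/-- diagonal extraction for finitely many sequential-compactness facts. -/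
lemma extract {α : Type*} (m : ℕ) (K : ℕ → Set α) (d : ℕ → α → α → ℝ≥0∞)
    (hK : ∀ i < m, ∀ x : ℕ → α, (∀ n, x n ∈ K i) →
      ∃ f ∈ K i, ∃ φ : ℕ → ℕ, StrictMono φ ∧ Tendsto (fun n => d i (x (φ n)) f) atTop (nhds 0))
    (G : ℕ → ℕ → α) (hG : ∀ i < m, ∀ n, G i n ∈ K i) :
    ∃ φ : ℕ → ℕ, StrictMono φ ∧ ∃ g : ℕ → α, ∀ i < m,
      g i ∈ K i ∧ Tendsto (fun n => d i (G i (φ n)) (g i)) atTop (nhds 0) := by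
  induction m with
  | zero => exact ⟨id, strictMono_id, fun i => G i 0, by omega⟩
  | succ m ih =>
    obtain ⟨φ, hφ, g, hg⟩ := ih (fun i hi => hK i (by omega)) (fun i hi n => hG i (by omega) n)
    obtain ⟨f, hf, ψ, hψ, hconv⟩ := hK m (by omega) (fun n => G m (φ n))
      (fun n => hG m (by omega) (φ n))
    refine ⟨φ ∘ ψ, hφ.comp hψ, Function.update g m f, fun i hi => ?_⟩
    rcases Nat.lt_or_ge i m with h' | h'
    · rw [Function.update_of_ne (by omega)]
      exact ⟨(hg i h').1, ((hg i h').2).comp hψ.tendsto_atTop⟩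
    · have : i = m := by omega
      subst this
      rw [Function.update_self]
      exact ⟨hf, hconv⟩

section GlueF

variable {E : Type*} [MetricSpace E] {l : ℕ} {u : ℕ → ℝ} {g : ℕ → ℝ → E}

/-- the glued limit path -/
def glueF (l : ℕ) (u : ℕ → ℝ) (g : ℕ → ℝ → E) : ℝ → E := glueFun l u g (g (l - 1))

lemma glueF_eq (hmono : ∀ i < l, u i < u (i + 1)) {i : ℕ} (hi : i < l) {t : ℝ}
    (ht : u i ≤ t) (ht2 : t < u (i + 1)) : glueF l u g t = g i t :=
  glueFun_eq hmono g _ hi ht ht2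

lemma glueF_end (hmono : ∀ i < l, u i < u (i + 1)) :
    glueF l u g (u l) = g (l - 1) (u l) :=
  glueFun_of_ge hmono g _ le_rfl

lemma glueF_cadlag (hl : 0 < l) (hmono : ∀ i < l, u i < u (i + 1))
    (hcad : ∀ i < l, Cadlag (u i) (u (i + 1)) (g i)) :
    Cadlag (u 0) (u l) (glueF l u g) := by
  refine ⟨?_, ?_, ?_⟩
  · intro t ht
    obtain ⟨i, hi, h1, h2⟩ := part_find hmono ht.1 ht.2
    have hrc := (hcad i hi).1 t ⟨h1, h2⟩
    have hmem : Set.Iio (u (i + 1)) ∈ nhdsWithin t (Set.Ioc t (u l)) :=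
      nhdsWithin_le_nhds (Iio_mem_nhds h2)
    rw [← nhdsWithin_inter_of_mem hmem]
    have hsub : Set.Iio (u (i + 1)) ∩ Set.Ioc t (u l) ⊆ Set.Ioc t (u (i + 1)) :=
      fun s hs => ⟨hs.2.1, le_of_lt hs.1⟩
    have heq : ∀ s ∈ Set.Iio (u (i + 1)) ∩ Set.Ioc t (u l), glueF l u g s = g i s := by
      intro s hs
      exact glueF_eq hmono hi (le_trans h1 (le_of_lt hs.2.1)) hs.1
    rw [glueF_eq hmono hi h1 h2]
    exact (hrc.mono_left (nhdsWithin_mono _ hsub)).congr'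
      (eventually_nhdsWithin_of_forall fun s hs => (heq s hs).symm)
  · intro t ht
    obtain ⟨i, hi, h1, h2⟩ := part_find_left hmono ht.1 ht.2
    obtain ⟨L, hL⟩ := (hcad i hi).2.1 t ⟨h1, h2⟩
    refine ⟨L, ?_⟩
    have hmem : Set.Ioi (u i) ∈ nhdsWithin t (Set.Ico (u 0) t) :=
      nhdsWithin_le_nhds (Ioi_mem_nhds h1)
    rw [← nhdsWithin_inter_of_mem hmem]
    have hsub : Set.Ioi (u i) ∩ Set.Ico (u 0) t ⊆ Set.Ico (u i) t :=
      fun s hs => ⟨le_of_lt hs.1, hs.2.2⟩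
    have heq : ∀ s ∈ Set.Ioi (u i) ∩ Set.Ico (u 0) t, glueF l u g s = g i s := by
      intro s hs
      exact glueF_eq hmono hi (le_of_lt hs.1) (lt_of_lt_of_le hs.2.2 h2)
    exact (hL.mono_left (nhdsWithin_mono _ hsub)).congr'
      (eventually_nhdsWithin_of_forall fun s hs => (heq s hs).symm)
  · have hl1 : l - 1 < l := by omega
    have hll : (l - 1) + 1 = l := by omega
    have hcont := (hcad (l - 1) hl1).2.2
    rw [hll] at hcont
    have hul : u (l - 1) < u l := by
      have := hmono (l - 1) hl1; rwa [hll] at this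
    have hmem : Set.Ioi (u (l - 1)) ∈ nhdsWithin (u l) (Set.Icc (u 0) (u l)) :=
      nhdsWithin_le_nhds (Ioi_mem_nhds hul)
    rw [← nhdsWithin_inter_of_mem hmem, glueF_end hmono]
    have hsub : Set.Ioi (u (l - 1)) ∩ Set.Icc (u 0) (u l) ⊆ Set.Icc (u (l - 1)) (u l) :=
      fun s hs => ⟨le_of_lt hs.1, hs.2.2⟩
    have heq : ∀ s ∈ Set.Ioi (u (l - 1)) ∩ Set.Icc (u 0) (u l),
        glueF l u g s = g (l - 1) s := by
      intro s hs
      rcases lt_or_eq_of_le hs.2.2 with h | h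
      · exact glueF_eq hmono hl1 (le_of_lt hs.1) (hll ▸ h)
      · rw [h]; exact glueF_end hmono
    exact (hcont.mono_left (nhdsWithin_mono _ hsub)).congr'
      (eventually_nhdsWithin_of_forall fun s hs => (heq s hs).symm)

lemma glueF_restriction (hmono : ∀ i < l, u i < u (i + 1))
    (hcad : ∀ i < l, Cadlag (u i) (u (i + 1)) (g i)) {i : ℕ} (hi : i < l) :
    IsRestriction (u i) (u (i + 1)) (glueF l u g) (g i) := by
  constructor
  · intro t ht
    exact (glueF_eq hmono hi ht.1 ht.2).symm
  · have hcont := (hcad i hi).2.2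
    have : Tendsto (g i) (nhdsWithin (u (i+1)) (Set.Ico (u i) (u (i+1))))
        (nhds (g i (u (i+1)))) :=
      hcont.mono_left (nhdsWithin_mono _ Set.Ico_subset_Icc_self)
    exact this.congr'
      (eventually_nhdsWithin_of_forall fun s hs => (glueF_eq hmono hi hs.1 hs.2).symm)

end GlueF
end Stmt15Aux

/-- if, for each interval of a finite partition
`a = u₀ < … < u_l = b`, the restricted processes `Xₙ^{[u_{i-1},u_i]}` are tight in
`D([u_{i-1}, u_i], E)`, then `(Xₙ)` is tight in `D([a,b], E)`. -/
theorem stmt15 [CompleteSpace E] [TopologicalSpace.SeparableSpace E]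
    {Ω : Type*} [MeasurableSpace Ω] (P : Measure Ω) [IsProbabilityMeasure P]
    (a b : ℝ) (hab : a < b) (l : ℕ) (hl : 0 < l) (u : ℕ → ℝ)
    (hu0 : u 0 = a) (hul : u l = b) (humono : ∀ i < l, u i < u (i + 1))
    (X : ℕ → Ω → ℝ → E) (Xr : ℕ → ℕ → Ω → ℝ → E)
    (hcad : ∀ n ω, Cadlag a b (X n ω))
    (hrestr : ∀ i < l, ∀ n ω, IsRestriction (u i) (u (i + 1)) (X n ω) (Xr i n ω))
    (htight : ∀ i < l, ∀ ε : ℝ, 0 < ε →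
      ∃ K, SkCompact (u i) (u (i + 1)) K ∧
        ∀ n, P {ω | Xr i n ω ∉ K} ≤ ENNReal.ofReal ε) :
    ∀ ε : ℝ, 0 < ε →
      ∃ K, SkCompact a b K ∧ ∀ n, P {ω | X n ω ∉ K} ≤ ENNReal.ofReal ε := by
  intro ε hε
  subst hu0; subst hul
  have hεl : 0 < ε / l := by positivity
  -- choose the compact sets on the pieces
  obtain ⟨Ks, hKs⟩ : ∃ Ks : ℕ → Set (ℝ → E), ∀ i, ∀ hi : i < l,
      SkCompact (u i) (u (i + 1)) (Ks i) ∧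
      ∀ n, P {ω | Xr i n ω ∉ Ks i} ≤ ENNReal.ofReal (ε / l) := by
    refine ⟨fun i => if h : i < l then (htight i h (ε / l) hεl).choose else Set.univ,
      fun i hi => ?_⟩
    simp only [dif_pos hi]
    exact (htight i hi (ε / l) hεl).choose_spec
  set K : Set (ℝ → E) := {f | Cadlag (u 0) (u l) f ∧
    ∀ i, ∀ _ : i < l, ∃ g ∈ Ks i, IsRestriction (u i) (u (i + 1)) f g} with hK
  refine ⟨K, ⟨fun f hf => hf.1, ?_⟩, ?_⟩
  · -- sequential compactness of K
    intro x hx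
    have hxcad : ∀ n, Cadlag (u 0) (u l) (x n) := fun n => (hx n).1
    have hGex : ∀ i n, ∃ g : ℝ → E, i < l →
        g ∈ Ks i ∧ IsRestriction (u i) (u (i + 1)) (x n) g := by
      intro i n
      by_cases h : i < l
      · obtain ⟨g, hg1, hg2⟩ := (hx n).2 i h
        exact ⟨g, fun _ => ⟨hg1, hg2⟩⟩
      · exact ⟨x n, fun h' => absurd h' h⟩
    choose G hG using hGex
    obtain ⟨φ, hφ, g, hg⟩ := Stmt15Aux.extract l Ks
      (fun i => skDist (u i) (u (i + 1))) (fun i hi => ((hKs i hi).1).2)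
      G (fun i hi n => (hG i n hi).1)
    have hgK : ∀ i, ∀ hi : i < l, g i ∈ Ks i := fun i hi => (hg i hi).1
    have hgcad : ∀ i < l, Cadlag (u i) (u (i + 1)) (g i) :=
      fun i hi => ((hKs i hi).1).1 (g i) (hgK i hi)
    set f : ℝ → E := Stmt15Aux.glueF l u g with hf
    have hfcad : Cadlag (u 0) (u l) f := Stmt15Aux.glueF_cadlag hl humono hgcad
    refine ⟨f, ⟨hfcad, fun i hi =>
      ⟨g i, hgK i hi, Stmt15Aux.glueF_restriction humono hgcad hi⟩⟩, φ, hφ, ?_⟩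
    rw [ENNReal.tendsto_atTop_zero]
    intro δ hδ
    obtain ⟨c, hc, hcδ⟩ : ∃ c : ℝ, 0 < c ∧ ENNReal.ofReal c ≤ δ := by
      rcases eq_or_ne δ ⊤ with h | h
      · exact ⟨1, one_pos, by simp [h]⟩
      · exact ⟨δ.toReal, ENNReal.toReal_pos hδ.ne' h, by rw [ENNReal.ofReal_toReal h]⟩
    have hev : ∀ᶠ n in atTop, ∀ i ∈ Finset.range l,
        skDist (u i) (u (i + 1)) (G i (φ n)) (g i) < ENNReal.ofReal c := by
      rw [eventually_all_finset]
      intro i hi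
      exact ((hg i (Finset.mem_range.mp hi)).2).eventually_lt_const
        (ENNReal.ofReal_pos.mpr hc)
    obtain ⟨N, hN⟩ := eventually_atTop.mp hev
    refine ⟨N, fun n hn => ?_⟩
    have hn' := hN n hn
    -- choose near-optimal time changes on each piece
    have hlamex : ∀ i, ∃ lam : ℝ → ℝ, i < l → lam ∈ TimeChanges (u i) (u (i + 1)) ∧
        gammaTC (u i) (u (i + 1)) lam ≤ ENNReal.ofReal c ∧
        (⨆ (t : ℝ) (_ : t ∈ Set.Icc (u i) (u (i + 1))),
          edist (G i (φ n) (lam t)) (g i t)) ≤ ENNReal.ofReal c := by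
      intro i
      by_cases hi : i < l
      · have hlt := hn' i (Finset.mem_range.mpr hi)
        rw [skDist] at hlt
        obtain ⟨lam, hlam⟩ := iInf_lt_iff.mp hlt
        obtain ⟨hmem, hlt2⟩ := iInf_lt_iff.mp hlam
        refine ⟨lam, fun _ => ⟨hmem, ?_, ?_⟩⟩
        · exact le_of_lt (lt_of_le_of_lt (le_max_left _ _) hlt2)
        · exact le_of_lt (lt_of_le_of_lt (le_max_right _ _) hlt2)
      · exact ⟨id, fun h' => absurd h' hi⟩
    choose lams hlams using hlamex
    have hlmem : ∀ i < l, lams i ∈ TimeChanges (u i) (u (i + 1)) :=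
      fun i hi => (hlams i hi).1
    have hlγ : ∀ i < l, gammaTC (u i) (u (i + 1)) (lams i) ≤ ENNReal.ofReal c :=
      fun i hi => (hlams i hi).2.1
    obtain ⟨hLmem, hLγ⟩ := Stmt15Aux.glueL_mem hl humono hlmem hc.le hlγ
    have hbound : skDist (u 0) (u l) (x (φ n)) f ≤ ENNReal.ofReal c := by
      rw [skDist]
      refine le_trans (iInf₂_le (Stmt15Aux.glueL l u lams) hLmem) (max_le hLγ ?_)
      refine iSup₂_le fun t ht => ?_
      rcases lt_or_eq_of_le ht.2 with hlt | heq
      · -- t < u l : t lies in some piece [u i, u (i+1))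
        obtain ⟨i, hi, h1, h2⟩ := Stmt15Aux.part_find humono ht.1 hlt
        have hLt : Stmt15Aux.glueL l u lams t = lams i t :=
          Stmt15Aux.glueL_eq humono hlmem hi ⟨h1, le_of_lt h2⟩
        have htm : t ∈ Set.Icc (u i) (u (i + 1)) := ⟨h1, le_of_lt h2⟩
        have hendm : u (i + 1) ∈ Set.Icc (u i) (u (i + 1)) :=
          ⟨le_of_lt (humono i hi), le_rfl⟩
        have hub : lams i t < u (i + 1) := by
          have := (hlmem i hi).1 htm hendm h2
          rwa [(hlmem i hi).2.2.2] at this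
        have hlb : u i ≤ lams i t := by
          have := ((hlmem i hi).1.monotoneOn) ⟨le_rfl, le_of_lt (humono i hi)⟩ htm h1
          rwa [(hlmem i hi).2.2.1] at this
        have hxG : x (φ n) (lams i t) = G i (φ n) (lams i t) :=
          ((hG i (φ n) hi).2.1 (lams i t) ⟨hlb, hub⟩).symm
        have hft : f t = g i t := Stmt15Aux.glueF_eq humono hi h1 h2
        rw [hLt, hxG, hft]
        refine le_trans ?_ (hlams i hi).2.2
        exact le_iSup₂_of_le t htm le_rfl
      · -- t = u l
        have hl1 : l - 1 < l := by omega
        have hll : (l - 1) + 1 = l := by omega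
        have hul' : u (l - 1) < u l := by
          have := humono (l - 1) hl1; rwa [hll] at this
        have hLt : Stmt15Aux.glueL l u lams t = t := by
          rw [heq, Stmt15Aux.glueL, Stmt15Aux.glueFun_of_ge humono lams id le_rfl]
          rfl
        have hres := (hG (l - 1) (φ n) hl1).2
        rw [hll] at hres
        have hxv : G (l - 1) (φ n) (u l) = x (φ n) (u l) := by
          refine Stmt15Aux.restr_right_val hul' ?_ hres
          refine ((hxcad (φ n)).2.2).mono_left (nhdsWithin_mono _ ?_)
          intro s hs
          exact ⟨le_trans (Stmt15Aux.part_mono humono (Nat.zero_le _) (by omega)) hs.1,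
            le_of_lt hs.2⟩
        have hft : f t = g (l - 1) (u l) := by
          rw [heq]; exact Stmt15Aux.glueF_end humono
        have hlend : lams (l - 1) (u l) = u l := by
          have := (hlmem (l - 1) hl1).2.2.2
          rwa [hll] at this
        rw [hLt, hft, heq, ← hxv]
        refine le_trans ?_ (hlams (l - 1) hl1).2.2
        have hulm : u l ∈ Set.Icc (u (l - 1)) (u ((l - 1) + 1)) := by
          rw [hll]; exact ⟨le_of_lt hul', le_rfl⟩
        refine le_iSup₂_of_le (u l) hulm ?_
        rw [hlend]
    exact le_trans hbound hcδ
  · -- the probability bound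
    intro n
    have hsub : {ω | X n ω ∉ K} ⊆ ⋃ i ∈ Finset.range l, {ω | Xr i n ω ∉ Ks i} := by
      intro ω hω
      simp only [Set.mem_setOf_eq] at hω
      by_contra hcon
      simp only [Set.mem_iUnion, Finset.mem_range, Set.mem_setOf_eq, not_exists,
        not_and, not_not] at hcon
      exact hω ⟨hcad n ω, fun i hi => ⟨Xr i n ω, hcon i hi, hrestr i hi n ω⟩⟩
    calc P {ω | X n ω ∉ K}
        ≤ ∑ i ∈ Finset.range l, P {ω | Xr i n ω ∉ Ks i} :=
          le_trans (measure_mono hsub) (measure_biUnion_finset_le _ _)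
      _ ≤ ∑ _i ∈ Finset.range l, ENNReal.ofReal (ε / l) :=
          Finset.sum_le_sum fun i hi => (hKs i (Finset.mem_range.mp hi)).2 n
      _ = l * ENNReal.ofReal (ε / l) := by
          rw [Finset.sum_const, Finset.card_range, nsmul_eq_mul]
      _ = ENNReal.ofReal ε := by
          rw [← ENNReal.ofReal_natCast l, ← ENNReal.ofReal_mul (by positivity)]
          congr 1
          field_simp
end
end

section
/- Let K_i be a compact subset of D([u_{i-1}, u_i], E) for each i in a finite partition a = u₀ < ... < u_l = b of [a,b], where E is a Polish space. Then the set K = {f ∈ D([a,b], E) : f^{[u_{i-1},u_i]} ∈ K_i for all i} is compact in D([a,b], E), where f^{[c,d]} denotes the restriction of f to [c,d) extended by the left limit f(d−) at d. -/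
open MeasureTheory Set Filter Topology
open scoped ENNReal

noncomputable section

variable {E : Type*} [MetricSpace E]

-- helpers

lemma timeChange_mapsTo {a b : ℝ} {lam : ℝ → ℝ} (h : lam ∈ TimeChanges a b) :
    ∀ t ∈ Icc a b, lam t ∈ Icc a b := fun t ht => h.2.1 ▸ mem_image_of_mem lam ht

lemma le_gammaTC {a b : ℝ} (lam : ℝ → ℝ) {p q : ℝ} (hp : p ∈ Icc a b) (hq : q ∈ Icc a b)
    (h : q < p) :
    ENNReal.ofReal |Real.log ((lam p - lam q) / (p - q))| ≤ gammaTC a b lam :=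
  le_iSup_of_le p (le_iSup_of_le hp (le_iSup_of_le q (le_iSup_of_le hq (le_iSup_of_le h le_rfl))))

lemma gammaTC_le {a b : ℝ} {lam : ℝ → ℝ} {M : ℝ≥0∞}
    (h : ∀ p ∈ Icc a b, ∀ q ∈ Icc a b, q < p →
      ENNReal.ofReal |Real.log ((lam p - lam q) / (p - q))| ≤ M) :
    gammaTC a b lam ≤ M :=
  iSup_le fun p => iSup_le fun hp => iSup_le fun q => iSup_le fun hq => iSup_le fun hqp =>
    h p hp q hq hqp

lemma skDist_le {a b : ℝ} {f g : ℝ → E} {lam : ℝ → ℝ} (h : lam ∈ TimeChanges a b) :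
    skDist a b f g ≤
      max (gammaTC a b lam) (⨆ t ∈ Icc a b, edist (f (lam t)) (g t)) :=
  iInf₂_le lam h

lemma skDist_congr_left {a b : ℝ} {f f' g : ℝ → E} (h : ∀ t ∈ Icc a b, f t = f' t) :
    skDist a b f g = skDist a b f' g := by
  refine iInf_congr fun lam => iInf_congr fun hlam => ?_
  congr 1
  exact iSup_congr fun t => iSup_congr fun ht => by
    rw [h _ (timeChange_mapsTo hlam t ht)]

lemma mediant_abs_log {p1 q1 p2 q2 : ℝ} (hp1 : 0 < p1) (hq1 : 0 < q1)
    (hp2 : 0 < p2) (hq2 : 0 < q2) :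
    |Real.log ((p1 + p2) / (q1 + q2))| ≤
      max |Real.log (p1 / q1)| |Real.log (p2 / q2)| := by
  have hq : 0 < q1 + q2 := by linarith
  have hr1 : 0 < p1 / q1 := div_pos hp1 hq1
  have hr2 : 0 < p2 / q2 := div_pos hp2 hq2
  have hr : 0 < (p1 + p2) / (q1 + q2) := div_pos (by linarith) hq
  have key : ∀ x y : ℝ, 0 < x → p1 / q1 ≤ x → p2 / q2 ≤ y →
      (p1 + p2) / (q1 + q2) ≤ max x y := by
    intro x y hx h1 h2
    rw [div_le_iff₀ hq]
    have e1 : p1 ≤ max x y * q1 := by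
      rw [div_le_iff₀ hq1] at h1
      exact h1.trans (mul_le_mul_of_nonneg_right (le_max_left _ _) hq1.le)
    have e2 : p2 ≤ max x y * q2 := by
      rw [div_le_iff₀ hq2] at h2
      exact h2.trans (mul_le_mul_of_nonneg_right (le_max_right _ _) hq2.le)
    nlinarith
  have key' : ∀ x y : ℝ, x ≤ p1 / q1 → y ≤ p2 / q2 →
      min x y ≤ (p1 + p2) / (q1 + q2) := by
    intro x y h1 h2
    rw [le_div_iff₀ hq]
    have e1 : min x y * q1 ≤ p1 := by
      rw [← le_div_iff₀ hq1]
      exact (min_le_left _ _).trans h1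
    have e2 : min x y * q2 ≤ p2 := by
      rw [← le_div_iff₀ hq2]
      exact (min_le_right _ _).trans h2
    nlinarith
  set M := max |Real.log (p1 / q1)| |Real.log (p2 / q2)| with hM
  rw [abs_le]
  constructor
  · have hub : Real.exp (-M) ≤ (p1 + p2) / (q1 + q2) := by
      refine le_trans ?_ (key' (p1 / q1) (p2 / q2) le_rfl le_rfl)
      rcases le_total (p1 / q1) (p2 / q2) with h | h
      · rw [min_eq_left h]
        calc Real.exp (-M) ≤ Real.exp (Real.log (p1 / q1)) := by
              apply Real.exp_le_exp.mpr
              have : |Real.log (p1 / q1)| ≤ M := le_max_left _ _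
              rw [abs_le] at this; linarith [this.1]
          _ = p1 / q1 := Real.exp_log hr1
      · rw [min_eq_right h]
        calc Real.exp (-M) ≤ Real.exp (Real.log (p2 / q2)) := by
              apply Real.exp_le_exp.mpr
              have : |Real.log (p2 / q2)| ≤ M := le_max_right _ _
              rw [abs_le] at this; linarith [this.1]
          _ = p2 / q2 := Real.exp_log hr2
    have := Real.log_le_log (Real.exp_pos _) hub
    rwa [Real.log_exp] at this
  · have hub : (p1 + p2) / (q1 + q2) ≤ Real.exp M := by
      refine (key (p1 / q1) (p2 / q2) hr1 le_rfl le_rfl).trans ?_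
      have e1 : p1 / q1 ≤ Real.exp M := by
        calc p1 / q1 = Real.exp (Real.log (p1 / q1)) := (Real.exp_log hr1).symm
          _ ≤ Real.exp M := Real.exp_le_exp.mpr ((le_abs_self _).trans (le_max_left _ _))
      have e2 : p2 / q2 ≤ Real.exp M := by
        calc p2 / q2 = Real.exp (Real.log (p2 / q2)) := (Real.exp_log hr2).symm
          _ ≤ Real.exp M := Real.exp_le_exp.mpr ((le_abs_self _).trans (le_max_right _ _))
      exact max_le e1 e2
    have := Real.log_le_log hr hub
    rwa [Real.log_exp] at this

-- helper: tendsto congruence on a set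
section H2
variable {α β : Type*} [TopologicalSpace α]

lemma tendsto_congr_on {f g : α → β} {s : Set α} {p : α} {l : Filter β}
    (h : ∀ x ∈ s, f x = g x) (hg : Filter.Tendsto g (nhdsWithin p s) l) :
    Filter.Tendsto f (nhdsWithin p s) l := by
  refine hg.congr' ?_
  filter_upwards [self_mem_nhdsWithin] with x hx
  exact (h x hx).symm

lemma tendsto_nhdsWithin_shrink {f g : α → β} {p : α} {s t U : Set α}
    (hU : U ∈ nhds p) (hsub : s ∩ U ⊆ t) (heq : ∀ x ∈ s ∩ U, f x = g x)
    {l : Filter β} (hg : Filter.Tendsto g (nhdsWithin p t) l) :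
    Filter.Tendsto f (nhdsWithin p s) l := by
  have h1 : nhdsWithin p (s ∩ U) = nhdsWithin p s := by
    rw [nhdsWithin_inter']
    exact inf_eq_left.mpr (le_principal_iff.mpr (mem_nhdsWithin_of_mem_nhds hU))
  rw [← h1]
  exact tendsto_congr_on heq (hg.mono_left (nhdsWithin_mono _ hsub))

end H2

lemma cadlag_restrict {a c b : ℝ} (hac : a < c) (hcb : c ≤ b) {x : ℝ → E}
    (hx : Cadlag a b x) {L : E} (hL : Tendsto x (nhdsWithin c (Ico a c)) (nhds L)) :
    Cadlag a c (fun t => if t < c then x t else L) := by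
  set y : ℝ → E := fun t => if t < c then x t else L with hy
  refine ⟨?_, ?_, ?_⟩
  · intro t ht
    have hyt : y t = x t := if_pos ht.2
    rw [hyt]
    refine tendsto_nhdsWithin_shrink (U := Iio c) (t := Ioc t b)
      (Iio_mem_nhds ht.2) ?_ ?_ (hx.1 t ⟨ht.1, lt_of_lt_of_le ht.2 hcb⟩)
    · rintro s ⟨hs1, hs2⟩; exact ⟨hs1.1, hs1.2.trans hcb⟩
    · rintro s ⟨hs1, hs2⟩; exact if_pos hs2
  · intro t ht
    obtain ⟨M, hM⟩ := hx.2.1 t ⟨ht.1, ht.2.trans hcb⟩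
    exact ⟨M, tendsto_congr_on (fun s hs => if_pos (lt_of_lt_of_le hs.2 ht.2)) hM⟩
  · have hyc : y c = L := if_neg (lt_irrefl c)
    rw [hyc, ← Ico_union_right hac.le, nhdsWithin_union, tendsto_sup]
    constructor
    · exact tendsto_congr_on (fun s hs => if_pos hs.2) hL
    · rw [nhdsWithin_singleton]
      have : Tendsto y (pure c) (nhds (y c)) := tendsto_pure_nhds y c
      rwa [hyc] at this

lemma cadlag_glue {a c b : ℝ} (hac : a < c) (hcb : c < b) {f' g : ℝ → E}
    (hf' : Cadlag a c f') (hg : Cadlag c b g) :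
    Cadlag a b (fun t => if t < c then f' t else g t) := by
  set f : ℝ → E := fun t => if t < c then f' t else g t with hfdef
  refine ⟨?_, ?_, ?_⟩
  · intro t ht
    by_cases htc : t < c
    · have hft : f t = f' t := if_pos htc
      rw [hft]
      refine tendsto_nhdsWithin_shrink (U := Iio c) (t := Ioc t c)
        (Iio_mem_nhds htc) ?_ ?_ (hf'.1 t ⟨ht.1, htc⟩)
      · rintro s ⟨hs1, hs2⟩; exact ⟨hs1.1, hs2.le⟩
      · rintro s ⟨hs1, hs2⟩; exact if_pos hs2
    · have hft : f t = g t := if_neg htc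
      rw [hft]
      refine tendsto_congr_on ?_ (hg.1 t ⟨not_lt.mp htc, ht.2⟩)
      intro s hs
      exact if_neg (not_lt.mpr ((not_lt.mp htc).trans hs.1.le))
  · intro t ht
    by_cases htc : t ≤ c
    · obtain ⟨M, hM⟩ := hf'.2.1 t ⟨ht.1, htc⟩
      exact ⟨M, tendsto_congr_on (fun s hs => if_pos (lt_of_lt_of_le hs.2 htc)) hM⟩
    · push_neg at htc
      obtain ⟨M, hM⟩ := hg.2.1 t ⟨htc, ht.2⟩
      refine ⟨M, tendsto_nhdsWithin_shrink (U := Ioi c) (t := Ico c t)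
        (Ioi_mem_nhds htc) ?_ ?_ hM⟩
      · rintro s ⟨hs1, hs2⟩; exact ⟨le_of_lt hs2, hs1.2⟩
      · rintro s ⟨hs1, hs2⟩; exact if_neg (not_lt.mpr (le_of_lt hs2))
  · have hfb : f b = g b := if_neg (not_lt.mpr hcb.le)
    rw [hfb]
    refine tendsto_nhdsWithin_shrink (U := Ioi c) (t := Icc c b)
      (Ioi_mem_nhds hcb) ?_ ?_ hg.2.2
    · rintro s ⟨hs1, hs2⟩; exact ⟨le_of_lt hs2, hs1.2⟩
    · rintro s ⟨hs1, hs2⟩; exact if_neg (not_lt.mpr (le_of_lt hs2))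

lemma exists_timeChange_lt {a b : ℝ} {f g : ℝ → E} {C : ℝ≥0∞}
    (h : skDist a b f g < C) :
    ∃ lam, lam ∈ TimeChanges a b ∧
      max (gammaTC a b lam) (⨆ t ∈ Icc a b, edist (f (lam t)) (g t)) < C := by
  rw [skDist] at h
  obtain ⟨lam, h'⟩ := iInf_lt_iff.mp h
  obtain ⟨hm, hv⟩ := iInf_lt_iff.mp h'
  exact ⟨lam, hm, hv⟩

lemma timeChange_glue {a c b : ℝ} (hac : a < c) (hcb : c < b) {lam1 lam2 : ℝ → ℝ}
    (h1 : lam1 ∈ TimeChanges a c) (h2 : lam2 ∈ TimeChanges c b) :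
    (fun t => if t < c then lam1 t else lam2 t) ∈ TimeChanges a b ∧
    (∀ t ∈ Icc a c, (fun t => if t < c then lam1 t else lam2 t) t = lam1 t) ∧
    (∀ t ∈ Icc c b, (fun t => if t < c then lam1 t else lam2 t) t = lam2 t) := by
  obtain ⟨hm1, hi1, ha1, hb1⟩ := h1
  obtain ⟨hm2, hi2, ha2, hb2⟩ := h2
  set Lam : ℝ → ℝ := fun t => if t < c then lam1 t else lam2 t with hLdef
  have hL1 : ∀ t ∈ Icc a c, Lam t = lam1 t := by
    intro t ht
    by_cases h : t < c
    · exact if_pos h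
    · have htc : t = c := le_antisymm ht.2 (not_lt.mp h)
      simp only [Lam, htc, lt_irrefl, if_false, ha2, hb1]
  have hL2 : ∀ t ∈ Icc c b, Lam t = lam2 t := fun t ht =>
    if_neg (not_lt.mpr ht.1)
  refine ⟨⟨?_, ?_, ?_, ?_⟩, hL1, hL2⟩
  · -- strict mono
    intro s hs t ht hst
    by_cases htc : t ≤ c
    · rw [hL1 s ⟨hs.1, hst.le.trans htc⟩, hL1 t ⟨ht.1, htc⟩]
      exact hm1 ⟨hs.1, hst.le.trans htc⟩ ⟨ht.1, htc⟩ hst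
    · push_neg at htc
      rw [hL2 t ⟨htc.le, ht.2⟩]
      by_cases hsc : s < c
      · rw [hL1 s ⟨hs.1, hsc.le⟩]
        have e1 : lam1 s < c := by
          have := hm1 ⟨hs.1, hsc.le⟩ ⟨hac.le, le_rfl⟩ hsc
          rwa [hb1] at this
        have e2 : c < lam2 t := by
          have := hm2 ⟨le_rfl, hcb.le⟩ ⟨htc.le, ht.2⟩ htc
          rwa [ha2] at this
        linarith
      · rw [hL2 s ⟨not_lt.mp hsc, hs.2⟩]
        exact hm2 ⟨not_lt.mp hsc, hs.2⟩ ⟨htc.le, ht.2⟩ hst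
  · rw [← Icc_union_Icc_eq_Icc hac.le hcb.le, image_union,
      image_congr hL1, image_congr hL2, hi1, hi2,
      Icc_union_Icc_eq_Icc hac.le hcb.le]
  · rw [hL1 a ⟨le_rfl, hac.le⟩, ha1]
  · rw [hL2 b ⟨hcb.le, le_rfl⟩, hb2]

lemma skDist_glue {a c b : ℝ} (hac : a < c) (hcb : c < b)
    {x y z f' g : ℝ → E}
    (hyx : ∀ t ∈ Ico a c, y t = x t)
    (hzx : ∀ t ∈ Ico c b, z t = x t)
    (hzb : z b = x b) :
    skDist a b x (fun t => if t < c then f' t else g t) ≤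
      skDist a c y f' + skDist c b z g := by
  set f : ℝ → E := fun t => if t < c then f' t else g t with hfdef
  refine ENNReal.le_of_forall_pos_le_add fun ε hε hfin => ?_
  set D1 := skDist a c y f' with hD1
  set D2 := skDist c b z g with hD2
  have hD1t : D1 ≠ ⊤ := (lt_of_le_of_lt le_self_add hfin).ne
  have hD2t : D2 ≠ ⊤ := (lt_of_le_of_lt le_add_self hfin).ne
  set δ : ℝ≥0∞ := (ε : ℝ≥0∞) / 2 with hδ
  have hδ0 : δ ≠ 0 := (ENNReal.half_pos (by exact_mod_cast hε.ne')).ne'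
  have hlt1 : D1 < D1 + δ := ENNReal.lt_add_right hD1t hδ0
  have hlt2 : D2 < D2 + δ := ENNReal.lt_add_right hD2t hδ0
  obtain ⟨lam1, hlam1, hval1⟩ := exists_timeChange_lt hlt1
  obtain ⟨lam2, hlam2, hval2⟩ := exists_timeChange_lt hlt2
  obtain ⟨hLam, hL1, hL2⟩ := timeChange_glue hac hcb hlam1 hlam2
  set Lam : ℝ → ℝ := fun t => if t < c then lam1 t else lam2 t with hLdef
  -- facts about lam1, lam2
  have hmaps1 := timeChange_mapsTo hlam1
  have hmaps2 := timeChange_mapsTo hlam2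
  have hlam1c : lam1 c = c := by
    have := hlam1.2.2.2; exact this
  have hlam2c : lam2 c = c := hlam2.2.2.1
  have hlam2b : lam2 b = b := hlam2.2.2.2
  have hlam1lt : ∀ t ∈ Ico a c, lam1 t < c := by
    intro t ht
    have := hlam1.1 ⟨ht.1, ht.2.le⟩ ⟨hac.le, le_rfl⟩ ht.2
    rwa [hlam1c] at this
  have hlam2lt : ∀ t ∈ Ico c b, lam2 t < b := by
    intro t ht
    have := hlam2.1 ⟨ht.1, ht.2.le⟩ ⟨hcb.le, le_rfl⟩ ht.2
    rwa [hlam2b] at this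
  -- gamma bound
  have hγ : gammaTC a b Lam ≤ max (gammaTC a c lam1) (gammaTC c b lam2) := by
    refine gammaTC_le fun p hp q hq hqp => ?_
    by_cases hpc : p ≤ c
    · have hqm : q ∈ Icc a c := ⟨hq.1, hqp.le.trans hpc⟩
      have hpm : p ∈ Icc a c := ⟨hp.1, hpc⟩
      rw [hL1 p hpm, hL1 q hqm]
      exact le_max_of_le_left (le_gammaTC lam1 hpm hqm hqp)
    · push_neg at hpc
      by_cases hqc : c ≤ q
      · have hqm : q ∈ Icc c b := ⟨hqc, hqp.le.trans hp.2⟩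
        have hpm : p ∈ Icc c b := ⟨hpc.le, hp.2⟩
        rw [hL2 p hpm, hL2 q hqm]
        exact le_max_of_le_right (le_gammaTC lam2 hpm hqm hqp)
      · push_neg at hqc
        have hqm : q ∈ Icc a c := ⟨hq.1, hqc.le⟩
        have hpm : p ∈ Icc c b := ⟨hpc.le, hp.2⟩
        have e1 : lam1 q < c := hlam1lt q ⟨hq.1, hqc⟩
        have e2 : c < lam2 p := by
          have := hlam2.1 ⟨le_rfl, hcb.le⟩ hpm hpc
          rwa [hlam2c] at this
        have hrw1 : Lam p - Lam q = (lam2 p - c) + (c - lam1 q) := by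
          rw [hL2 p hpm, hL1 q hqm]; ring
        have hrw2 : p - q = (p - c) + (c - q) := by ring
        rw [hrw1, hrw2]
        have hmed := mediant_abs_log (p1 := lam2 p - c) (q1 := p - c)
          (p2 := c - lam1 q) (q2 := c - q)
          (by linarith) (by linarith) (by linarith) (by linarith)
        refine le_trans (ENNReal.ofReal_le_ofReal hmed) ?_
        rw [Monotone.map_max (fun _ _ h => ENNReal.ofReal_le_ofReal h)]
        refine max_le ?_ ?_
        · refine le_max_of_le_right ?_
          have : (lam2 p - c) / (p - c) = (lam2 p - lam2 c) / (p - c) := by rw [hlam2c]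
          rw [this]
          exact le_gammaTC lam2 hpm ⟨le_rfl, hcb.le⟩ hpc
        · refine le_max_of_le_left ?_
          have : (c - lam1 q) / (c - q) = (lam1 c - lam1 q) / (c - q) := by rw [hlam1c]
          rw [this]
          exact le_gammaTC lam1 ⟨hac.le, le_rfl⟩ hqm hqc
  -- sup bound
  have hS : (⨆ t ∈ Icc a b, edist (x (Lam t)) (f t)) ≤
      max (⨆ t ∈ Icc a c, edist (y (lam1 t)) (f' t))
        (⨆ t ∈ Icc c b, edist (z (lam2 t)) (g t)) := by
    refine iSup₂_le fun t ht => ?_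
    by_cases htc : t < c
    · have htm : t ∈ Icc a c := ⟨ht.1, htc.le⟩
      have hlm : lam1 t ∈ Icc a c := hmaps1 t htm
      have hl : lam1 t < c := hlam1lt t ⟨ht.1, htc⟩
      have e1 : x (Lam t) = y (lam1 t) := by
        rw [hL1 t htm, (hyx (lam1 t) ⟨hlm.1, hl⟩)]
      have e2 : f t = f' t := if_pos htc
      rw [e1, e2]
      exact le_max_of_le_left (le_iSup₂_of_le t htm le_rfl)
    · push_neg at htc
      have htm : t ∈ Icc c b := ⟨htc, ht.2⟩
      have e2 : f t = g t := if_neg (not_lt.mpr htc)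
      have e1 : x (Lam t) = z (lam2 t) := by
        rw [hL2 t htm]
        rcases eq_or_lt_of_le ht.2 with hb | hb
        · rw [hb, hlam2b, hzb]
        · have hlm : lam2 t ∈ Icc c b := hmaps2 t htm
          exact (hzx (lam2 t) ⟨hlm.1, hlam2lt t ⟨htc, hb⟩⟩).symm
      rw [e1, e2]
      exact le_max_of_le_right (le_iSup₂_of_le t htm le_rfl)
  -- combine
  have hle : skDist a b x f ≤ (D1 + δ) + (D2 + δ) := by
    refine le_trans (skDist_le hLam) ?_
    have step1 : max (gammaTC a b Lam) (⨆ t ∈ Icc a b, edist (x (Lam t)) (f t)) ≤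
        max (max (gammaTC a c lam1) (⨆ t ∈ Icc a c, edist (y (lam1 t)) (f' t)))
          (max (gammaTC c b lam2) (⨆ t ∈ Icc c b, edist (z (lam2 t)) (g t))) := by
      refine max_le (hγ.trans (max_le_max (le_max_left _ _) (le_max_left _ _)))
        (hS.trans (max_le_max (le_max_right _ _) (le_max_right _ _)))
    refine step1.trans ?_
    exact max_le (hval1.le.trans le_self_add) (hval2.le.trans le_add_self)
  calc skDist a b x f ≤ (D1 + δ) + (D2 + δ) := hle
    _ = D1 + D2 + (δ + δ) := by ring
    _ = D1 + D2 + ε := by rw [hδ, ENNReal.add_halves]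

lemma main_ind : ∀ l : ℕ, 1 ≤ l → ∀ (a b : ℝ), a < b → ∀ u : ℕ → ℝ, u 0 = a → u l = b →
    (∀ i < l, u i < u (i + 1)) → ∀ K : ℕ → Set (ℝ → E),
    (∀ i < l, SkCompact (u i) (u (i + 1)) (K i)) →
    SkCompact a b {f | Cadlag a b f ∧
      ∀ i < l, ∃ g ∈ K i, IsRestriction (u i) (u (i + 1)) f g} := by
  intro l hl
  induction l, hl using Nat.le_induction with
  | base =>
    intro a b hab u hu0 hu1 humono K hK
    subst hu0; subst hu1
    constructor
    · exact fun f hf => hf.1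
    intro x hx
    have h01 : (0 : ℕ) < 1 := one_pos
    choose g hgK hgR using fun n => (hx n).2 0 h01
    obtain ⟨f, hfK, φ, hφ, hconv⟩ := (hK 0 h01).2 g hgK
    have hcadf : Cadlag (u 0) (u 1) f := (hK 0 h01).1 f hfK
    refine ⟨f, ⟨hcadf, ?_⟩, φ, hφ, ?_⟩
    · intro i hi
      have hi0 : i = 0 := by omega
      subst hi0
      exact ⟨f, hfK, fun t _ => rfl,
        hcadf.2.2.mono_left (nhdsWithin_mono _ Ico_subset_Icc_self)⟩
    · have hne : (nhdsWithin (u 1) (Ico (u 0) (u 1))).NeBot := by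
        refine mem_closure_iff_nhdsWithin_neBot.mp ?_
        rw [closure_Ico hab.ne]
        exact ⟨hab.le, le_rfl⟩
      have heq : ∀ n, skDist (u 0) (u 1) (x (φ n)) f = skDist (u 0) (u 1) (g (φ n)) f := by
        intro n
        apply skDist_congr_left
        intro t ht
        rcases eq_or_lt_of_le ht.2 with hb | hb
        · rw [hb]
          have h1 : Tendsto (x (φ n)) (nhdsWithin (u 1) (Ico (u 0) (u 1)))
              (nhds (g (φ n) (u 1))) := (hgR (φ n)).2
          have h2 : Tendsto (x (φ n)) (nhdsWithin (u 1) (Ico (u 0) (u 1)))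
              (nhds (x (φ n) (u 1))) :=
            ((hx (φ n)).1).2.2.mono_left (nhdsWithin_mono _ Ico_subset_Icc_self)
          exact tendsto_nhds_unique h2 h1
        · exact ((hgR (φ n)).1 t ⟨ht.1, hb⟩).symm
      simp only [heq]
      exact hconv
  | succ l hl ih =>
    intro a b hab u hu0 hul humono K hK
    subst hu0; subst hul
    have hchain : ∀ j, ∀ i, i < j → j ≤ l + 1 → u i < u j := by
      intro j
      induction j with
      | zero => intro i hi _; omega
      | succ k ihk =>
        intro i hi hk1
        have hk : u k < u (k + 1) := humono k (by omega)
        rcases Nat.lt_succ_iff_lt_or_eq.mp hi with h | h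
        · exact (ihk i h (by omega)).trans hk
        · subst h; exact hk
    have hac : u 0 < u l := hchain l 0 (by omega) (by omega)
    have hcb : u l < u (l + 1) := humono l (by omega)
    constructor
    · exact fun f hf => hf.1
    intro x hx
    have xcad : ∀ n, Cadlag (u 0) (u (l + 1)) (x n) := fun n => (hx n).1
    choose L hL using fun n => (xcad n).2.1 (u l) ⟨hac, hcb.le⟩
    set y : ℕ → ℝ → E := fun n t => if t < u l then x n t else L n with hy
    choose z hzK hzR using fun n => (hx n).2 l (by omega)
    have hyK' : ∀ n, Cadlag (u 0) (u l) (y n) ∧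
        ∀ i < l, ∃ g ∈ K i, IsRestriction (u i) (u (i + 1)) (y n) g := by
      intro n
      constructor
      · exact cadlag_restrict hac hcb.le (xcad n) (hL n)
      · intro i hi
        obtain ⟨gi, hgiK, hgiR⟩ := (hx n).2 i (by omega)
        have hui1 : u (i + 1) ≤ u l := by
          rcases eq_or_lt_of_le (Nat.succ_le_of_lt hi) with h | h
          · exact le_of_eq (congrArg u h)
          · exact (hchain l (i + 1) h (by omega)).le
        refine ⟨gi, hgiK, ?_, ?_⟩
        · intro t ht
          rw [hgiR.1 t ht]
          simp only [hy]
          rw [if_pos (lt_of_lt_of_le ht.2 hui1)]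
        · refine tendsto_congr_on ?_ hgiR.2
          intro s hs
          simp only [hy]
          rw [if_pos (lt_of_lt_of_le hs.2 hui1)]
    obtain ⟨f', hf'K, φ, hφ, hconv1⟩ :=
      (ih (u 0) (u l) hac u rfl rfl (fun i hi => humono i (by omega)) K
        (fun i hi => hK i (by omega))).2 y hyK'
    obtain ⟨g, hgK, ψ, hψ, hconv2⟩ :=
      (hK l (by omega)).2 (fun n => z (φ n)) (fun n => hzK (φ n))
    set f : ℝ → E := fun t => if t < u l then f' t else g t with hfdef
    have hcadf' : Cadlag (u 0) (u l) f' := hf'K.1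
    have hcadg : Cadlag (u l) (u (l + 1)) g := (hK l (by omega)).1 g hgK
    have hcadf : Cadlag (u 0) (u (l + 1)) f := cadlag_glue hac hcb hcadf' hcadg
    have hzb : ∀ n, z n (u (l + 1)) = x n (u (l + 1)) := by
      intro n
      have hne : (nhdsWithin (u (l + 1)) (Ico (u l) (u (l + 1)))).NeBot := by
        refine mem_closure_iff_nhdsWithin_neBot.mp ?_
        rw [closure_Ico hcb.ne]
        exact ⟨hcb.le, le_rfl⟩
      have h1 : Tendsto (x n) (nhdsWithin (u (l + 1)) (Ico (u l) (u (l + 1))))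
          (nhds (z n (u (l + 1)))) := (hzR n).2
      have h2 : Tendsto (x n) (nhdsWithin (u (l + 1)) (Ico (u l) (u (l + 1))))
          (nhds (x n (u (l + 1)))) :=
        (xcad n).2.2.mono_left (nhdsWithin_mono _
          (fun s hs => ⟨hac.le.trans hs.1, hs.2.le⟩))
      exact tendsto_nhds_unique h1 h2
    refine ⟨f, ⟨hcadf, ?_⟩, fun n => φ (ψ n), hφ.comp hψ, ?_⟩
    · intro i hi
      by_cases hil : i < l
      · obtain ⟨gi, hgiK, hgiR⟩ := hf'K.2 i hil
        have hui1 : u (i + 1) ≤ u l := by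
          rcases eq_or_lt_of_le (Nat.succ_le_of_lt hil) with h | h
          · exact le_of_eq (congrArg u h)
          · exact (hchain l (i + 1) h (by omega)).le
        refine ⟨gi, hgiK, ?_, ?_⟩
        · intro t ht
          rw [hgiR.1 t ht]
          simp only [hfdef]
          rw [if_pos (lt_of_lt_of_le ht.2 hui1)]
        · refine tendsto_congr_on ?_ hgiR.2
          intro s hs
          simp only [hfdef]
          rw [if_pos (lt_of_lt_of_le hs.2 hui1)]
      · have hil' : i = l := by omega
        subst hil'
        refine ⟨g, hgK, ?_, ?_⟩
        · intro t ht
          simp only [hfdef]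
          rw [if_neg (not_lt.mpr ht.1)]
        · refine tendsto_congr_on ?_
            (hcadg.2.2.mono_left (nhdsWithin_mono _ Ico_subset_Icc_self))
          intro s hs
          simp only [hfdef]
          rw [if_neg (not_lt.mpr hs.1)]
    · have hle : ∀ n, skDist (u 0) (u (l + 1)) (x (φ (ψ n))) f ≤
          skDist (u 0) (u l) (y (φ (ψ n))) f' +
            skDist (u l) (u (l + 1)) (z (φ (ψ n))) g := by
        intro n
        refine skDist_glue hac hcb ?_ ?_ ?_
        · intro t ht
          simp only [hy]
          rw [if_pos ht.2]
        · exact fun t ht => (hzR (φ (ψ n))).1 t ht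
        · exact hzb (φ (ψ n))
      have h1 : Tendsto (fun n => skDist (u 0) (u l) (y (φ (ψ n))) f') atTop (nhds 0) := by
        have := hconv1.comp hψ.tendsto_atTop
        exact this
      have hsum : Tendsto (fun n => skDist (u 0) (u l) (y (φ (ψ n))) f' +
          skDist (u l) (u (l + 1)) (z (φ (ψ n))) g) atTop (nhds 0) := by
        simpa using h1.add hconv2
      exact tendsto_of_tendsto_of_tendsto_of_le_of_le tendsto_const_nhds hsum
        (fun n => zero_le) hle


/-- if `K i` is compact in `D([u_{i-1}, u_i], E)` for each interval of a
finite partition `a = u₀ < … < u_l = b`, then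
`K = {f ∈ D([a,b],E) : f^{[u_{i-1},u_i]} ∈ K_i ∀ i}` is compact in `D([a,b], E)`. -/
theorem stmt16 [CompleteSpace E] [TopologicalSpace.SeparableSpace E]
    (a b : ℝ) (hab : a < b) (l : ℕ) (hl : 0 < l) (u : ℕ → ℝ)
    (hu0 : u 0 = a) (hul : u l = b) (humono : ∀ i < l, u i < u (i + 1))
    (K : ℕ → Set (ℝ → E)) (hK : ∀ i < l, SkCompact (u i) (u (i + 1)) (K i)) :
    SkCompact a b
      {f | Cadlag a b f ∧
        ∀ i < l, ∃ g ∈ K i, IsRestriction (u i) (u (i + 1)) f g} :=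
  main_ind l hl a b hab u hu0 hul humono K hK
end
end
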